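/- arXiv:2512.06445 — 3 statements merged into one kernel-verified Lean document; each statement's English description precedes it below -/
import Mathlib

section
/- In the setting of the constrained Palais–Smale analysis (G noncompact connected metric graph with finitely many edges, p > 4, μ > 0, ρ ∈ [1/2,1], {u_n} ⊂ H¹_μ(G) a bounded Palais–Smale sequence for E_ρ(·,G) at level c > 0 with multipliers λ_n → λ_ρ and weak limit u_ρ which solves the limit equation), assume λ_ρ ≥ 0. Then ∫_G |(u_n − u_ρ)'|² dx + λ_ρ ∫_G |u_n − u_ρ|² dx → 0 as n → ∞. In particular, if λ_ρ > 0, then u_n → u_ρ strongly in H¹(G). -/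
open MeasureTheory Filter Topology Set
open scoped ENNReal

/-- A metric graph with finitely many vertices and edges.  Each edge `e` has a length
`length e ∈ (0,∞]`; `length e = ⊤` means that `e` is a half-line `[0,∞)`. The
endpoint of `e` identified with `0` is `src e`; for a bounded edge the endpoint
identified with `ℓ_e` is `dst e`; a half-line has no second endpoint (`dst e = none`). -/
structure MetricGraph where
  V : Type
  E : Type
  fintV : Fintype V
  fintE : Fintype E
  decV : DecidableEq V
  length : E → ℝ≥0∞
  length_pos : ∀ e, 0 < length e
  src : E → V
  dst : E → Option V
  dst_none_iff : ∀ e, dst e = none ↔ length e = ⊤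

attribute [instance] MetricGraph.fintV MetricGraph.fintE MetricGraph.decV

namespace MetricGraph

variable (G : MetricGraph)

/-- The interval `I_e` that edge `e` is identified with. -/
def interval (e : G.E) : Set ℝ :=
  if G.length e = ⊤ then Set.Ici 0 else Set.Icc 0 (G.length e).toReal

/-- Two vertices are adjacent if some bounded edge joins them. -/
def Adj (v w : G.V) : Prop :=
  ∃ e, (G.src e = v ∧ G.dst e = some w) ∨ (G.src e = w ∧ G.dst e = some v)

/-- The graph is connected. -/
def Connected : Prop := ∀ v w : G.V, Relation.ReflTransGen G.Adj v w

/-- The graph is noncompact, i.e. it has at least one half-line. -/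
def Noncompact : Prop := ∃ e, G.length e = ⊤

/-- The graph is compact, i.e. all edges are bounded. -/
def IsCompactGraph : Prop := ∀ e, G.length e ≠ ⊤

/-- Raw data of a function on the graph: the family of edge functions, the family of their
derivatives, and the family of vertex values. -/
abbrev Fun : Type := (G.E → ℝ → ℝ) × (G.E → ℝ → ℝ) × (G.V → ℝ)

/-- The edge functions `u_e`. -/
def eFun (u : G.Fun) : G.E → ℝ → ℝ := u.1

/-- The edge derivatives `u_e'`. -/
def eDeriv (u : G.Fun) : G.E → ℝ → ℝ := u.2.1

/-- The vertex values `u(v)`. -/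
def vVal (u : G.Fun) : G.V → ℝ := u.2.2

/-- `u ∈ H¹(G)`: every edge function is continuous on `I_e` with derivative `eDeriv u e`
in the interior, both the function and its derivative are in `L²(I_e)`, and the edge
functions take the common value `vVal u v` at each vertex `v` (continuity at vertices). -/
def IsH1 (u : G.Fun) : Prop :=
  (∀ e, ContinuousOn (G.eFun u e) (G.interval e)) ∧
  (∀ e, ∀ x ∈ interior (G.interval e), HasDerivAt (G.eFun u e) (G.eDeriv u e x) x) ∧
  (∀ e, MemLp (G.eFun u e) 2 (volume.restrict (G.interval e))) ∧
  (∀ e, MemLp (G.eDeriv u e) 2 (volume.restrict (G.interval e))) ∧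
  (∀ e, G.eFun u e 0 = G.vVal u (G.src e)) ∧
  (∀ e v, G.dst e = some v → G.eFun u e (G.length e).toReal = G.vVal u v)

/-- `‖u‖₂²`. -/
noncomputable def l2sq (u : G.Fun) : ℝ := ∑ e, ∫ x in G.interval e, (G.eFun u e x) ^ 2

/-- `‖u'‖₂²`. -/
noncomputable def dsq (u : G.Fun) : ℝ := ∑ e, ∫ x in G.interval e, (G.eDeriv u e x) ^ 2

/-- `‖u‖²_{H¹(G)}`. -/
noncomputable def h1sq (u : G.Fun) : ℝ := G.dsq u + G.l2sq u

/-- `‖u‖_{H¹(G)}`. -/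
noncomputable def h1norm (u : G.Fun) : ℝ := Real.sqrt (G.h1sq u)

/-- The `L²(G)` inner product. -/
noncomputable def l2inner (u w : G.Fun) : ℝ :=
  ∑ e, ∫ x in G.interval e, G.eFun u e x * G.eFun w e x

/-- `∫_G u'w' dx`. -/
noncomputable def dinner (u w : G.Fun) : ℝ :=
  ∑ e, ∫ x in G.interval e, G.eDeriv u e x * G.eDeriv w e x

/-- The `H¹(G)` inner product. -/
noncomputable def h1inner (u w : G.Fun) : ℝ := G.dinner u w + G.l2inner u w

/-- `Σ_{v∈V} |u(v)|^{p-2} u(v) η(v)`. -/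
noncomputable def vertexTerm (p : ℝ) (u η : G.Fun) : ℝ :=
  ∑ v, |G.vVal u v| ^ (p - 2) * G.vVal u v * G.vVal η v

/-- `Σ_{v∈V} |u(v)|^p`. -/
noncomputable def vertexLp (p : ℝ) (u : G.Fun) : ℝ := ∑ v, |G.vVal u v| ^ p

/-- The energy functional `E_ρ(u, G) = ½‖u'‖₂² − (ρ/p) Σ_{v∈V} |u(v)|^p`. -/
noncomputable def energy (p ρ : ℝ) (u : G.Fun) : ℝ :=
  (1 / 2) * G.dsq u - (ρ / p) * G.vertexLp p u

/-- `E_ρ'(u, G)[η] = ∫_G u'η' dx − ρ Σ_{v∈V} |u(v)|^{p−2} u(v) η(v)`. -/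
noncomputable def energyDeriv (p ρ : ℝ) (u η : G.Fun) : ℝ :=
  G.dinner u η - ρ * G.vertexTerm p u η

/-- `E_ρ''(u, G)[w,w] = ∫_G |w'|² dx − (p−1) ρ Σ_{v∈V} |u(v)|^{p−2} w(v)²`. -/
noncomputable def energyDeriv2 (p ρ : ℝ) (u w : G.Fun) : ℝ :=
  G.dsq w - (p - 1) * ρ * ∑ v, |G.vVal u v| ^ (p - 2) * (G.vVal w v) ^ 2

/-- `(u, λ)` is a weak solution of `u'' = λ u` on every edge with the nonlinear vertex
conditions `Σ_{e ≻ v} u_e'(v) = −ρ |u(v)|^{p−2} u(v)` at every vertex, i.e.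
`∫_G u'η' dx + λ ∫_G uη dx = ρ Σ_{v∈V} |u(v)|^{p−2} u(v) η(v)` for all `η ∈ H¹(G)`. -/
def IsWeakSolution (p ρ lam : ℝ) (u : G.Fun) : Prop :=
  ∀ η : G.Fun, G.IsH1 η →
    G.dinner u η + lam * G.l2inner u η = ρ * G.vertexTerm p u η

end MetricGraph

section AuxIntegrable

open MeasureTheory

lemma aux_int_mul {ν : Measure ℝ} {f g : ℝ → ℝ} (hf : MemLp f 2 ν) (hg : MemLp g 2 ν) :
    Integrable (fun x => f x * g x) ν := by
  have h1 := hf.integrable_sq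
  have h2 := hg.integrable_sq
  have h3 : Integrable (fun x => (f x + g x) ^ 2) ν := (hf.add hg).integrable_sq
  have key : (fun x => f x * g x)
      = fun x => (((f x + g x) ^ 2 - f x ^ 2) - g x ^ 2) / 2 := by
    funext x; ring
  rw [key]
  exact ((h3.sub h1).sub h2).div_const 2

end AuxIntegrable

namespace MetricGraph

variable {G : MetricGraph}

/-- Pairing sum over edges. -/
noncomputable def pairS (G : MetricGraph) (f g : G.E → ℝ → ℝ) : ℝ :=
  ∑ e, ∫ x in G.interval e, f e x * g e x

/-- All edge functions of a family are in `L²`. -/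
def EdgeL2 (G : MetricGraph) (f : G.E → ℝ → ℝ) : Prop :=
  ∀ e, MeasureTheory.MemLp (f e) 2 (MeasureTheory.volume.restrict (G.interval e))

lemma eFun_sub (a b : G.Fun) : G.eFun (a - b) = fun e x => G.eFun a e x - G.eFun b e x := rfl

lemma eDeriv_sub (a b : G.Fun) :
    G.eDeriv (a - b) = fun e x => G.eDeriv a e x - G.eDeriv b e x := rfl

lemma vVal_sub (a b : G.Fun) : G.vVal (a - b) = fun v => G.vVal a v - G.vVal b v := rfl

lemma l2inner_eq (a b : G.Fun) : G.l2inner a b = G.pairS (G.eFun a) (G.eFun b) := rfl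

lemma dinner_eq (a b : G.Fun) : G.dinner a b = G.pairS (G.eDeriv a) (G.eDeriv b) := rfl

lemma l2sq_eq (a : G.Fun) : G.l2sq a = G.pairS (G.eFun a) (G.eFun a) := by
  unfold l2sq pairS; refine Finset.sum_congr rfl fun e _ => ?_
  simp_rw [pow_two]

lemma dsq_eq (a : G.Fun) : G.dsq a = G.pairS (G.eDeriv a) (G.eDeriv a) := by
  unfold dsq pairS; refine Finset.sum_congr rfl fun e _ => ?_
  simp_rw [pow_two]

lemma pairS_comm (f g : G.E → ℝ → ℝ) : G.pairS f g = G.pairS g f := by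
  unfold pairS; refine Finset.sum_congr rfl fun e _ => ?_
  simp_rw [mul_comm]

lemma pairS_self_nonneg (f : G.E → ℝ → ℝ) : 0 ≤ G.pairS f f :=
  Finset.sum_nonneg fun e _ => MeasureTheory.integral_nonneg fun x => mul_self_nonneg _

lemma pairS_sub_left (f f' g : G.E → ℝ → ℝ) (hf : G.EdgeL2 f) (hf' : G.EdgeL2 f')
    (hg : G.EdgeL2 g) :
    G.pairS (fun e x => f e x - f' e x) g = G.pairS f g - G.pairS f' g := by
  unfold pairS; rw [← Finset.sum_sub_distrib]
  refine Finset.sum_congr rfl fun e _ => ?_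
  have : ∀ x, (f e x - f' e x) * g e x = f e x * g e x - f' e x * g e x := fun x => by ring
  simp_rw [this]
  exact MeasureTheory.integral_sub (aux_int_mul (hf e) (hg e)) (aux_int_mul (hf' e) (hg e))

lemma pairS_add_left (f f' g : G.E → ℝ → ℝ) (hf : G.EdgeL2 f) (hf' : G.EdgeL2 f')
    (hg : G.EdgeL2 g) :
    G.pairS (fun e x => f e x + f' e x) g = G.pairS f g + G.pairS f' g := by
  unfold pairS; rw [← Finset.sum_add_distrib]
  refine Finset.sum_congr rfl fun e _ => ?_
  have : ∀ x, (f e x + f' e x) * g e x = f e x * g e x + f' e x * g e x := fun x => by ring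
  simp_rw [this]
  exact MeasureTheory.integral_add (aux_int_mul (hf e) (hg e)) (aux_int_mul (hf' e) (hg e))

lemma pairS_sub_right (f g g' : G.E → ℝ → ℝ) (hf : G.EdgeL2 f) (hg : G.EdgeL2 g)
    (hg' : G.EdgeL2 g') :
    G.pairS f (fun e x => g e x - g' e x) = G.pairS f g - G.pairS f g' := by
  rw [pairS_comm, pairS_sub_left g g' f hg hg' hf, pairS_comm g f, pairS_comm g' f]

lemma pairS_add_right (f g g' : G.E → ℝ → ℝ) (hf : G.EdgeL2 f) (hg : G.EdgeL2 g)
    (hg' : G.EdgeL2 g') :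
    G.pairS f (fun e x => g e x + g' e x) = G.pairS f g + G.pairS f g' := by
  rw [pairS_comm, pairS_add_left g g' f hg hg' hf, pairS_comm g f, pairS_comm g' f]

lemma pairS_sub_self (f g : G.E → ℝ → ℝ) (hf : G.EdgeL2 f) (hg : G.EdgeL2 g) :
    G.pairS (fun e x => f e x - g e x) (fun e x => f e x - g e x)
      = G.pairS f f - 2 * G.pairS f g + G.pairS g g := by
  have hfg : G.EdgeL2 fun e x => f e x - g e x := fun e => ((hf e).sub (hg e))
  rw [pairS_sub_left f g _ hf hg hfg, pairS_sub_right f f g hf hf hg,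
    pairS_sub_right g f g hg hf hg, pairS_comm g f]
  ring

lemma pairS_add_self (f g : G.E → ℝ → ℝ) (hf : G.EdgeL2 f) (hg : G.EdgeL2 g) :
    G.pairS (fun e x => f e x + g e x) (fun e x => f e x + g e x)
      = G.pairS f f + 2 * G.pairS f g + G.pairS g g := by
  have hfg : G.EdgeL2 fun e x => f e x + g e x := fun e => ((hf e).add (hg e))
  rw [pairS_add_left f g _ hf hg hfg, pairS_add_right f f g hf hf hg,
    pairS_add_right g f g hg hf hg, pairS_comm g f]
  ring

lemma abs_pairS_le (f g : G.E → ℝ → ℝ) (hf : G.EdgeL2 f) (hg : G.EdgeL2 g) :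
    |G.pairS f g| ≤ (G.pairS f f + G.pairS g g) / 2 := by
  have h1 := G.pairS_self_nonneg fun e x => f e x - g e x
  have h2 := G.pairS_self_nonneg fun e x => f e x + g e x
  rw [pairS_sub_self f g hf hg] at h1
  rw [pairS_add_self f g hf hg] at h2
  rw [abs_le]; constructor <;> linarith

end MetricGraph

namespace MetricGraph

variable {G : MetricGraph}

lemma zero_mem_interval (G : MetricGraph) (e : G.E) : (0 : ℝ) ∈ G.interval e := by
  unfold interval
  split
  · exact Set.self_mem_Ici
  · exact ⟨le_refl 0, ENNReal.toReal_nonneg⟩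

lemma toReal_mem_interval (G : MetricGraph) (e : G.E) (h : G.dst e ≠ none) :
    (G.length e).toReal ∈ G.interval e := by
  have hne : G.length e ≠ ⊤ := fun ht => h ((G.dst_none_iff e).mpr ht)
  unfold interval
  rw [if_neg hne]
  exact ⟨ENNReal.toReal_nonneg, le_refl _⟩

lemma exists_incident (G : MetricGraph) (hconn : G.Connected) (hnc : G.Noncompact) (v : G.V) :
    ∃ e, G.src e = v ∨ G.dst e = some v := by
  obtain ⟨e0, _⟩ := hnc
  rcases (hconn v (G.src e0)).cases_head with h | ⟨w, hadj, _⟩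
  · exact ⟨e0, Or.inl h.symm⟩
  · obtain ⟨e, h | h⟩ := hadj
    · exact ⟨e, Or.inl h.1⟩
    · exact ⟨e, Or.inr h.2⟩

lemma IsH1.sub {a b : G.Fun} (ha : G.IsH1 a) (hb : G.IsH1 b) : G.IsH1 (a - b) := by
  obtain ⟨ha1, ha2, ha3, ha4, ha5, ha6⟩ := ha
  obtain ⟨hb1, hb2, hb3, hb4, hb5, hb6⟩ := hb
  refine ⟨fun e => ?_, fun e x hx => ?_, fun e => ?_, fun e => ?_, fun e => ?_, fun e v hv => ?_⟩
  · exact (ha1 e).sub (hb1 e)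
  · exact (ha2 e x hx).sub (hb2 e x hx)
  · exact (ha3 e).sub (hb3 e)
  · exact (ha4 e).sub (hb4 e)
  · show G.eFun a e 0 - G.eFun b e 0 = G.vVal a (G.src e) - G.vVal b (G.src e)
    rw [ha5 e, hb5 e]
  · show G.eFun a e _ - G.eFun b e _ = G.vVal a v - G.vVal b v
    rw [ha6 e v hv, hb6 e v hv]

end MetricGraph

/-- Strong convergence of bounded constrained Palais–Smale sequences:
if the limit multiplier satisfies `λ_ρ ≥ 0`, then
`∫_G |(u_n − u_ρ)'|² dx + λ_ρ ∫_G |u_n − u_ρ|² dx → 0`; in particular if `λ_ρ > 0` then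
`u_n → u_ρ` strongly in `H¹(G)`. -/
theorem palais_smale_strong_convergence (G : MetricGraph) (hconn : G.Connected)
    (hnc : G.Noncompact) (p : ℝ) (hp : 4 < p) (μ : ℝ) (hμ : 0 < μ)
    (ρ : ℝ) (hρ : ρ ∈ Set.Icc (1 / 2 : ℝ) 1)
    (u : ℕ → G.Fun) (lam : ℕ → ℝ) (c : ℝ) (hc : 0 < c)
    (hH1 : ∀ n, G.IsH1 (u n)) (hmass : ∀ n, G.l2sq (u n) = μ)
    (hbdd : ∃ C : ℝ, ∀ n, G.h1norm (u n) ≤ C)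
    (hlevel : Filter.Tendsto (fun n => G.energy p ρ (u n)) Filter.atTop (nhds c))
    (hlam : ∀ n, lam n = -(1 / μ) * G.energyDeriv p ρ (u n) (u n))
    (hPS : ∀ ε > (0:ℝ), ∃ N : ℕ, ∀ n ≥ N, ∀ η : G.Fun, G.IsH1 η →
      |G.energyDeriv p ρ (u n) η + lam n * G.l2inner (u n) η| ≤ ε * G.h1norm η)
    (uρ : G.Fun) (huρ : G.IsH1 uρ) (lamρ : ℝ)
    (hlamlim : Filter.Tendsto lam Filter.atTop (nhds lamρ))
    (hweak : ∀ w : G.Fun, G.IsH1 w →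
      Filter.Tendsto (fun n => G.h1inner (u n) w) Filter.atTop (nhds (G.h1inner uρ w)))
    (hptwise : ∀ e, ∀ x ∈ G.interval e,
      Filter.Tendsto (fun n => G.eFun (u n) e x) Filter.atTop (nhds (G.eFun uρ e x)))
    (hsol : G.IsWeakSolution p ρ lamρ uρ)
    (hlamρ : 0 ≤ lamρ) :
    Filter.Tendsto (fun n => G.dsq (u n - uρ) + lamρ * G.l2sq (u n - uρ))
      Filter.atTop (nhds 0) ∧
    (0 < lamρ →
      Filter.Tendsto (fun n => G.h1norm (u n - uρ)) Filter.atTop (nhds 0)) := by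
  classical
  obtain ⟨C, hC⟩ := hbdd
  -- edge L² data
  have hE : ∀ n, G.EdgeL2 (G.eFun (u n)) := fun n => (hH1 n).2.2.1
  have hD : ∀ n, G.EdgeL2 (G.eDeriv (u n)) := fun n => (hH1 n).2.2.2.1
  have hEρ : G.EdgeL2 (G.eFun uρ) := huρ.2.2.1
  have hDρ : G.EdgeL2 (G.eDeriv uρ) := huρ.2.2.2.1
  have hwH1 : ∀ n, G.IsH1 (u n - uρ) := fun n => (hH1 n).sub huρ
  have hEw : ∀ n, G.EdgeL2 fun e x => G.eFun (u n) e x - G.eFun uρ e x :=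
    fun n e => ((hE n e).sub (hEρ e))
  have hDw : ∀ n, G.EdgeL2 fun e x => G.eDeriv (u n) e x - G.eDeriv uρ e x :=
    fun n e => ((hD n e).sub (hDρ e))
  -- expansions
  have edsq : ∀ n, G.dsq (u n - uρ)
      = G.dinner (u n) (u n - uρ) - G.dinner uρ (u n - uρ) := by
    intro n
    rw [MetricGraph.dsq_eq, MetricGraph.dinner_eq, MetricGraph.dinner_eq,
      MetricGraph.eDeriv_sub]
    exact G.pairS_sub_left _ _ _ (hD n) hDρ (hDw n)
  have el2sq : ∀ n, G.l2sq (u n - uρ)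
      = G.l2inner (u n) (u n - uρ) - G.l2inner uρ (u n - uρ) := by
    intro n
    rw [MetricGraph.l2sq_eq, MetricGraph.l2inner_eq, MetricGraph.l2inner_eq,
      MetricGraph.eFun_sub]
    exact G.pairS_sub_left _ _ _ (hE n) hEρ (hEw n)
  -- quantitative bounds
  have hC0 : 0 ≤ C := le_trans (Real.sqrt_nonneg _) (hC 0)
  have hh1sq_nonneg : ∀ n, 0 ≤ G.h1sq (u n) := fun n => by
    rw [MetricGraph.h1sq, MetricGraph.dsq_eq, MetricGraph.l2sq_eq]
    exact add_nonneg (G.pairS_self_nonneg _) (G.pairS_self_nonneg _)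
  have hh1sq_le : ∀ n, G.h1sq (u n) ≤ C ^ 2 := fun n => by
    have h := hC n
    rw [MetricGraph.h1norm] at h
    calc G.h1sq (u n) = Real.sqrt (G.h1sq (u n)) ^ 2 := (Real.sq_sqrt (hh1sq_nonneg n)).symm
      _ ≤ C ^ 2 := by
          apply pow_le_pow_left₀ (Real.sqrt_nonneg _) h
  have hdsq_le : ∀ n, G.dsq (u n) ≤ C ^ 2 := fun n => by
    have := hh1sq_le n
    have h2 : 0 ≤ G.l2sq (u n) := by
      rw [MetricGraph.l2sq_eq]; exact G.pairS_self_nonneg _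
    rw [MetricGraph.h1sq] at this; linarith
  have hl2_eq : ∀ n, G.l2sq (u n) = μ := hmass
  -- bound on h1norm of differences
  set D : ℝ := G.h1sq uρ with hDdef
  have hD0 : 0 ≤ D := by
    rw [hDdef, MetricGraph.h1sq, MetricGraph.dsq_eq, MetricGraph.l2sq_eq]
    exact add_nonneg (G.pairS_self_nonneg _) (G.pairS_self_nonneg _)
  have hcross : ∀ n, |G.dinner (u n) uρ + G.l2inner (u n) uρ| ≤ (G.h1sq (u n) + D) / 2 := by
    intro n
    have h1 : |G.dinner (u n) uρ| ≤ (G.dsq (u n) + G.dsq uρ) / 2 := by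
      rw [MetricGraph.dinner_eq, MetricGraph.dsq_eq, MetricGraph.dsq_eq]
      exact G.abs_pairS_le _ _ (hD n) hDρ
    have h2 : |G.l2inner (u n) uρ| ≤ (G.l2sq (u n) + G.l2sq uρ) / 2 := by
      rw [MetricGraph.l2inner_eq, MetricGraph.l2sq_eq, MetricGraph.l2sq_eq]
      exact G.abs_pairS_le _ _ (hE n) hEρ
    have := abs_add_le (G.dinner (u n) uρ) (G.l2inner (u n) uρ)
    rw [hDdef, MetricGraph.h1sq, MetricGraph.h1sq]
    linarith
  have hh1sq_w : ∀ n, G.h1sq (u n - uρ) ≤ 2 * C ^ 2 + 2 * D := by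
    intro n
    have e1 : G.dsq (u n - uρ) = G.dsq (u n) - 2 * G.dinner (u n) uρ + G.dsq uρ := by
      rw [MetricGraph.dsq_eq, MetricGraph.eDeriv_sub, MetricGraph.dsq_eq,
        MetricGraph.dsq_eq, MetricGraph.dinner_eq]
      exact G.pairS_sub_self _ _ (hD n) hDρ
    have e2 : G.l2sq (u n - uρ) = G.l2sq (u n) - 2 * G.l2inner (u n) uρ + G.l2sq uρ := by
      rw [MetricGraph.l2sq_eq, MetricGraph.eFun_sub, MetricGraph.l2sq_eq,
        MetricGraph.l2sq_eq, MetricGraph.l2inner_eq]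
      exact G.pairS_sub_self _ _ (hE n) hEρ
    have h3 := hcross n
    have h4 := hh1sq_le n
    have h5 := abs_le.mp h3
    rw [MetricGraph.h1sq, e1, e2]
    have hDsum : G.h1sq uρ = G.dsq uρ + G.l2sq uρ := rfl
    rw [hDdef, MetricGraph.h1sq] at h5 ⊢
    rw [MetricGraph.h1sq] at h4
    linarith [h5.1, h5.2, hDsum]
  set M : ℝ := Real.sqrt (2 * C ^ 2 + 2 * D) with hMdef
  have hM0 : 0 ≤ M := Real.sqrt_nonneg _
  have hwnorm : ∀ n, G.h1norm (u n - uρ) ≤ M := by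
    intro n
    rw [MetricGraph.h1norm, hMdef]
    exact Real.sqrt_le_sqrt (hh1sq_w n)
  -- bound on L_n = l2inner (u n) (u n - uρ)
  have hl2sq_w : ∀ n, G.l2sq (u n - uρ) ≤ 2 * μ + 2 * G.l2sq uρ := by
    intro n
    have e2 : G.l2sq (u n - uρ) = G.l2sq (u n) - 2 * G.l2inner (u n) uρ + G.l2sq uρ := by
      rw [MetricGraph.l2sq_eq, MetricGraph.eFun_sub, MetricGraph.l2sq_eq,
        MetricGraph.l2sq_eq, MetricGraph.l2inner_eq]
      exact G.pairS_sub_self _ _ (hE n) hEρ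
    have h2 : |G.l2inner (u n) uρ| ≤ (G.l2sq (u n) + G.l2sq uρ) / 2 := by
      rw [MetricGraph.l2inner_eq, MetricGraph.l2sq_eq, MetricGraph.l2sq_eq]
      exact G.abs_pairS_le _ _ (hE n) hEρ
    have h5 := abs_le.mp h2
    rw [e2, hmass n]
    rw [hmass n] at h5
    linarith [h5.1]
  set K : ℝ := (3 * μ + 2 * G.l2sq uρ) / 2 + 1 with hKdef
  have hLbound : ∀ n, |G.l2inner (u n) (u n - uρ)| ≤ K := by
    intro n
    have h2 : |G.l2inner (u n) (u n - uρ)| ≤ (G.l2sq (u n) + G.l2sq (u n - uρ)) / 2 := by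
      rw [MetricGraph.l2inner_eq, MetricGraph.l2sq_eq, MetricGraph.l2sq_eq]
      exact G.abs_pairS_le _ _ (hE n) (hwH1 n).2.2.1
    have h3 := hl2sq_w n
    rw [hmass n] at h2
    rw [hKdef]
    linarith
  -- PS term tends to 0
  have hPS0 : Filter.Tendsto
      (fun n => G.energyDeriv p ρ (u n) (u n - uρ) + lam n * G.l2inner (u n) (u n - uρ))
      Filter.atTop (nhds 0) := by
    rw [Metric.tendsto_atTop]
    intro ε hε
    obtain ⟨N, hN⟩ := hPS (ε / (M + 1)) (by positivity)
    refine ⟨N, fun n hn => ?_⟩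
    rw [Real.dist_eq, sub_zero]
    have h1 := hN n hn (u n - uρ) (hwH1 n)
    have h2 : ε / (M + 1) * G.h1norm (u n - uρ) ≤ ε / (M + 1) * M :=
      mul_le_mul_of_nonneg_left (hwnorm n) (by positivity)
    have h3 : ε / (M + 1) * M < ε := by
      have : ε / (M + 1) * M < ε / (M + 1) * (M + 1) := by
        apply mul_lt_mul_of_pos_left (by linarith) (by positivity)
      rwa [div_mul_cancel₀ ε (by positivity : M + 1 ≠ 0)] at this
    linarith
  -- multiplier term tends to 0
  have hlamterm : Filter.Tendsto
      (fun n => (lamρ - lam n) * G.l2inner (u n) (u n - uρ)) Filter.atTop (nhds 0) := by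
    apply squeeze_zero_norm (a := fun n => |lamρ - lam n| * K)
    · intro n
      rw [Real.norm_eq_abs, abs_mul]
      exact mul_le_mul_of_nonneg_left (hLbound n) (abs_nonneg _)
    · have h1 : Filter.Tendsto (fun n => lamρ - lam n) Filter.atTop (nhds 0) := by
        have := hlamlim.const_sub lamρ
        simpa using this
      simpa using (h1.abs.mul_const K)
  -- vertex values converge
  have hvval : ∀ v, Filter.Tendsto (fun n => G.vVal (u n) v) Filter.atTop
      (nhds (G.vVal uρ v)) := by
    intro v
    obtain ⟨e, he⟩ := G.exists_incident hconn hnc v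
    rcases he with h | h
    · have hpt := hptwise e 0 (G.zero_mem_interval e)
      have h1 : ∀ n, G.eFun (u n) e 0 = G.vVal (u n) v := fun n => by
        rw [(hH1 n).2.2.2.2.1 e, h]
      have h2 : G.eFun uρ e 0 = G.vVal uρ v := by rw [huρ.2.2.2.2.1 e, h]
      simp only [h1, h2] at hpt
      exact hpt
    · have hne : G.dst e ≠ none := by simp [h]
      have hpt := hptwise e _ (G.toReal_mem_interval e hne)
      have h1 : ∀ n, G.eFun (u n) e (G.length e).toReal = G.vVal (u n) v := fun n =>
        (hH1 n).2.2.2.2.2 e v h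
      have h2 : G.eFun uρ e (G.length e).toReal = G.vVal uρ v := huρ.2.2.2.2.2 e v h
      simp only [h1, h2] at hpt
      exact hpt
  -- vertex term tends to 0
  have hVT : Filter.Tendsto
      (fun n => G.vertexTerm p (u n) (u n - uρ) - G.vertexTerm p uρ (u n - uρ))
      Filter.atTop (nhds 0) := by
    have hrw : ∀ n, G.vertexTerm p (u n) (u n - uρ) - G.vertexTerm p uρ (u n - uρ)
        = ∑ v, (|G.vVal (u n) v| ^ (p - 2) * G.vVal (u n) v
            - |G.vVal uρ v| ^ (p - 2) * G.vVal uρ v) * (G.vVal (u n) v - G.vVal uρ v) := by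
      intro n
      rw [MetricGraph.vertexTerm, MetricGraph.vertexTerm, ← Finset.sum_sub_distrib]
      refine Finset.sum_congr rfl fun v _ => ?_
      rw [MetricGraph.vVal_sub]
      ring
    have h0 : (0 : ℝ) = ∑ _v : G.V, (0 : ℝ) := by simp
    rw [funext hrw, h0]
    apply tendsto_finset_sum
    intro v _
    set s : ℝ := G.vVal uρ v with hs
    have habs : ContinuousAt (fun x : ℝ => |x| ^ (p - 2)) s := by
      have h1 : ContinuousAt (fun y : ℝ => y ^ (p - 2)) |s| :=
        Real.continuousAt_rpow_const _ _ (Or.inr (by linarith))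
      exact h1.comp continuous_abs.continuousAt
    have hcont : ContinuousAt
        (fun x : ℝ => (|x| ^ (p - 2) * x - |s| ^ (p - 2) * s) * (x - s)) s :=
      (((habs.mul continuousAt_id).sub continuousAt_const).mul
        (continuousAt_id.sub continuousAt_const))
    have := hcont.tendsto.comp (hvval v)
    simpa [Function.comp_def] using this
  -- main identity
  have hIdent : ∀ n, G.dsq (u n - uρ) + lamρ * G.l2sq (u n - uρ)
      = (G.energyDeriv p ρ (u n) (u n - uρ) + lam n * G.l2inner (u n) (u n - uρ))
        + (lamρ - lam n) * G.l2inner (u n) (u n - uρ)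
        + ρ * (G.vertexTerm p (u n) (u n - uρ) - G.vertexTerm p uρ (u n - uρ)) := by
    intro n
    have e3 := hsol (u n - uρ) (hwH1 n)
    rw [edsq n, el2sq n, MetricGraph.energyDeriv]
    linear_combination -e3
  have hmain : Filter.Tendsto (fun n => G.dsq (u n - uρ) + lamρ * G.l2sq (u n - uρ))
      Filter.atTop (nhds 0) := by
    rw [funext hIdent]
    have := (hPS0.add hlamterm).add (hVT.const_mul ρ)
    simpa using this
  refine ⟨hmain, fun hpos => ?_⟩
  have hdsq_nn : ∀ n, 0 ≤ G.dsq (u n - uρ) := fun n => by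
    rw [MetricGraph.dsq_eq]; exact G.pairS_self_nonneg _
  have hl2_nn : ∀ n, 0 ≤ G.l2sq (u n - uρ) := fun n => by
    rw [MetricGraph.l2sq_eq]; exact G.pairS_self_nonneg _
  have hdsq0 : Filter.Tendsto (fun n => G.dsq (u n - uρ)) Filter.atTop (nhds 0) := by
    apply squeeze_zero hdsq_nn (fun n => ?_) hmain
    have := mul_nonneg hlamρ (hl2_nn n); linarith
  have hl20 : Filter.Tendsto (fun n => G.l2sq (u n - uρ)) Filter.atTop (nhds 0) := by
    have hg : Filter.Tendsto
        (fun n => (G.dsq (u n - uρ) + lamρ * G.l2sq (u n - uρ)) / lamρ)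
        Filter.atTop (nhds 0) := by
      have := hmain.div_const lamρ
      simpa using this
    refine squeeze_zero hl2_nn (fun n => ?_) hg
    rw [le_div_iff₀ hpos]
    have := hdsq_nn n; nlinarith
  have hh1sq0 : Filter.Tendsto (fun n => G.h1sq (u n - uρ)) Filter.atTop (nhds 0) := by
    have := hdsq0.add hl20
    simpa [MetricGraph.h1sq] using this
  have hsqrt := (Real.continuous_sqrt.continuousAt (x := (0:ℝ))).tendsto.comp hh1sq0
  simpa [MetricGraph.h1norm, Function.comp_def] using hsqrt
end

section
/- Let G = (V,E) be a noncompact connected metric graph with finitely many edges, p > 4, μ > 0, ρ ∈ [1/2,1], N ∈ ℕ⁺, and let {u_n} ⊂ H¹_μ(G) be a bounded Palais–Smale sequence for E_ρ(·,G) constrained on H¹_μ(G) with Lagrange multipliers λ_n → λ_ρ. Assume there exists a sequence {ζ_n} ⊂ ℝ⁺ with ζ_n → 0⁺ such that, for all large n, every linear subspace W_n of the tangent space T_{u_n}H¹_μ(G) = {v ∈ H¹(G) : (u_n, v)_{L²(G)} = 0} on which E_ρ''(u_n,G)[φ,φ] + λ_n‖φ‖₂² < −ζ_n‖φ‖²_{H¹(G)}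 holds for all φ ∈ W_n∖{0} satisfies dim W_n ≤ N. Then λ_ρ ≥ 0. -/
open MeasureTheory Filter Topology Set
open scoped ENNReal

open MeasureTheory Filter Topology Set
open scoped ENNReal

namespace LMAux

/-- `(max t 0)^2`, a C¹ function of `t`. -/
def pps (t : ℝ) : ℝ := (max t 0) ^ 2

lemma pps_nonneg (t : ℝ) : 0 ≤ pps t := sq_nonneg _

lemma pps_of_nonpos {t : ℝ} (h : t ≤ 0) : pps t = 0 := by simp [pps, max_eq_right h]

lemma hasDerivAt_pps (t : ℝ) : HasDerivAt pps (2 * max t 0) t := by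
  rcases lt_trichotomy t 0 with h | h | h
  · have hev : pps =ᶠ[nhds t] fun _ => 0 := by
      filter_upwards [Iio_mem_nhds h] with x hx
      simp [pps, max_eq_right (le_of_lt (mem_Iio.mp hx))]
    have : HasDerivAt pps 0 t :=
      (hasDerivAt_const t (0 : ℝ)).congr_of_eventuallyEq hev
    simpa [max_eq_right h.le] using this
  · subst h
    rw [hasDerivAt_iff_isLittleO]
    rw [Asymptotics.isLittleO_iff]
    intro c hc
    have : ∀ᶠ x : ℝ in nhds 0, |x| < c := by
      have := Metric.ball_mem_nhds (0 : ℝ) hc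
      filter_upwards [this] with x hx
      simpa [Real.dist_eq] using hx
    filter_upwards [this] with x hx
    have h1 : |max x 0| ≤ |x| := by
      rcases le_total x 0 with h' | h' <;> simp [max_eq_right, max_eq_left, h', abs_of_nonneg]
    have : pps x ≤ |x| * |x| := by
      rw [pps, sq]
      calc max x 0 * max x 0 = |max x 0| * |max x 0| := by
            rw [abs_of_nonneg (le_max_right x 0)]
        _ ≤ |x| * |x| := mul_le_mul h1 h1 (abs_nonneg _) (abs_nonneg _)
    have goal1 : ‖pps x - pps 0 - (x - 0) * 0‖ ≤ c * ‖x - 0‖ := by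
      have h0 : pps (0:ℝ) = 0 := by simp [pps]
      rw [h0]
      simp only [sub_zero, mul_zero, Real.norm_eq_abs]
      calc |pps x| = pps x := abs_of_nonneg (pps_nonneg x)
        _ ≤ |x| * |x| := this
        _ ≤ c * |x| := mul_le_mul_of_nonneg_right hx.le (abs_nonneg _)
    simpa [Real.norm_eq_abs] using goal1
  · have hev : pps =ᶠ[nhds t] fun x => x ^ 2 := by
      filter_upwards [Ioi_mem_nhds h] with x hx
      simp [pps, max_eq_left (le_of_lt (mem_Ioi.mp hx))]
    have : HasDerivAt pps (2 * t) t := by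
      simpa using ((hasDerivAt_pow 2 t).congr_of_eventuallyEq hev)
    simpa [max_eq_left h.le] using this

section BumpDef

variable (A L : ℝ)

/-- downward parabola, positive exactly on `(A, A+L)`. -/
def bq (x : ℝ) : ℝ := (x - A) * (A + L - x)
/-- the C¹ bump supported on `[A, A+L]`. -/
def bf (x : ℝ) : ℝ := pps (bq A L x)
/-- its derivative. -/
def bd (x : ℝ) : ℝ := 2 * max (bq A L x) 0 * (2 * A + L - 2 * x)

lemma bq_hasDerivAt (x : ℝ) : HasDerivAt (bq A L) (2 * A + L - 2 * x) x := by
  have h : HasDerivAt (fun y : ℝ => (y - A) * (A + L - y))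
      (1 * (A + L - x) + (x - A) * (0 - 1)) x :=
    (((hasDerivAt_id x).sub_const A).mul ((hasDerivAt_const x (A + L)).sub (hasDerivAt_id x)))
  show HasDerivAt (fun y : ℝ => (y - A) * (A + L - y)) _ x
  convert h using 1
  ring

lemma bf_hasDerivAt (x : ℝ) : HasDerivAt (bf A L) (bd A L x) x := by
  have := (hasDerivAt_pps (bq A L x)).comp x (bq_hasDerivAt A L x)
  exact this

lemma bf_nonneg (x : ℝ) : 0 ≤ bf A L x := pps_nonneg _

lemma bq_nonpos {x : ℝ} (hL : 0 ≤ L) (h : x ∉ Icc A (A + L)) : bq A L x ≤ 0 := by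
  rw [mem_Icc, not_and_or, not_le, not_le] at h
  unfold bq
  rcases h with h | h <;> nlinarith

lemma bf_zero' {x : ℝ} (h : bq A L x ≤ 0) : bf A L x = 0 := pps_of_nonpos h

lemma bd_zero' {x : ℝ} (h : bq A L x ≤ 0) : bd A L x = 0 := by
  rw [bd, max_eq_right h]; ring

lemma bf_zero {x : ℝ} (hL : 0 ≤ L) (h : x ∉ Icc A (A + L)) : bf A L x = 0 :=
  bf_zero' A L (bq_nonpos A L hL h)

lemma bd_zero {x : ℝ} (hL : 0 ≤ L) (h : x ∉ Icc A (A + L)) : bd A L x = 0 :=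
  bd_zero' A L (bq_nonpos A L hL h)

lemma bf_cont : Continuous (bf A L) := by unfold bf pps bq; fun_prop

lemma bd_cont : Continuous (bd A L) := by unfold bd bq; fun_prop

lemma bf_hcs (hL : 0 ≤ L) : HasCompactSupport (bf A L) :=
  HasCompactSupport.intro isCompact_Icc (fun _ h => bf_zero A L hL h)

lemma bd_hcs (hL : 0 ≤ L) : HasCompactSupport (bd A L) :=
  HasCompactSupport.intro isCompact_Icc (fun _ h => bd_zero A L hL h)

variable {L}

lemma bq_le (hL : 0 < L) (x : ℝ) : bq A L x ≤ L ^ 2 / 4 := by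
  have := sq_nonneg (2 * x - 2 * A - L)
  unfold bq; nlinarith

lemma bd_sq_le (hL : 0 < L) {x : ℝ} (hx : x ∈ Icc A (A + L)) :
    (bd A L x) ^ 2 ≤ L ^ 6 / 4 := by
  obtain ⟨h1, h2⟩ := hx
  have hq0 : 0 ≤ bq A L x := by unfold bq; nlinarith
  have hql : bq A L x ≤ L ^ 2 / 4 := bq_le A hL x
  have habs : (2 * A + L - 2 * x) ^ 2 ≤ L ^ 2 := by nlinarith
  rw [bd, max_eq_left hq0]
  nlinarith [sq_nonneg (bq A L x), sq_nonneg (2 * A + L - 2 * x),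
    mul_le_mul hql hql hq0 (by positivity : (0:ℝ) ≤ L ^ 2 / 4)]

lemma bf_sq_ge (hL : 0 < L) {x : ℝ} (hx : x ∈ Icc (A + L / 4) (A + 3 * L / 4)) :
    L ^ 8 / 65536 ≤ (bf A L x) ^ 2 := by
  obtain ⟨h1, h2⟩ := hx
  have hq : L ^ 2 / 16 ≤ bq A L x := by unfold bq; nlinarith
  have hq0 : 0 ≤ bq A L x := le_trans (by positivity) hq
  rw [bf, pps, max_eq_left hq0]
  nlinarith [sq_nonneg (bq A L x), mul_le_mul hq hq (by positivity) hq0]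

lemma bq_pos_bounds {x : ℝ} (hL : 0 < L) (h : 0 < bq A L x) : A < x ∧ x < A + L := by
  rcases mul_pos_iff.1 h with ⟨h1, h2⟩ | ⟨h1, h2⟩
  · exact ⟨by linarith, by linarith⟩
  · exact absurd hL (by linarith)

end BumpDef

section Integrals

variable {L : ℝ} (A : ℝ)

lemma integrable_sq_of (f : ℝ → ℝ) (hc : Continuous f) (hcs : HasCompactSupport f) :
    Integrable (fun x => f x ^ 2) (volume.restrict (Ici (0:ℝ))) :=
  ((hc.memLp_of_hasCompactSupport hcs).restrict _).integrable_sq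

lemma memL2_of (f : ℝ → ℝ) (hc : Continuous f) (hcs : HasCompactSupport f) :
    MemLp f 2 (volume.restrict (Ici (0:ℝ))) :=
  (hc.memLp_of_hasCompactSupport hcs).restrict _

lemma integrable_mul_of_memL2 {μ : Measure ℝ} (f g : ℝ → ℝ)
    (hf : MemLp f 2 μ) (hg : MemLp g 2 μ) : Integrable (fun x => f x * g x) μ := by
  have h1 : (1 : ℝ≥0∞) / 1 = 1 / 2 + 1 / 2 := by
    rw [ENNReal.add_halves]; simp
  have := hg.smul (r := 1) hf
  rw [memLp_one_iff_integrable] at this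
  exact hf.integrable_mul hg

lemma int_bd_le (hL : 0 < L) (hA : 0 ≤ A) :
    ∫ x in Ici (0:ℝ), (bd A L x) ^ 2 ≤ L ^ 7 / 4 := by
  have hind : Integrable (Set.indicator (Icc A (A + L)) (fun _ => L ^ 6 / 4))
      (volume.restrict (Ici (0:ℝ))) := by
    rw [integrable_indicator_iff measurableSet_Icc]
    exact integrableOn_const (by
      rw [Measure.restrict_apply measurableSet_Icc]
      exact (lt_of_le_of_lt (measure_mono inter_subset_left) measure_Icc_lt_top).ne)
  have hle : ∀ x, (bd A L x) ^ 2 ≤ Set.indicator (Icc A (A + L)) (fun _ => L ^ 6 / 4) x := by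
    intro x
    by_cases hx : x ∈ Icc A (A + L)
    · rw [Set.indicator_of_mem hx]; exact bd_sq_le A hL hx
    · rw [Set.indicator_of_notMem hx, bd_zero A L hL.le hx]; norm_num
  have := integral_mono (integrable_sq_of (bd A L) (bd_cont A L) (bd_hcs A L hL.le)) hind hle
  refine le_trans this ?_
  rw [integral_indicator_const _ measurableSet_Icc]
  rw [Measure.real, Measure.restrict_apply measurableSet_Icc]
  have hsub : Icc A (A + L) ∩ Ici 0 = Icc A (A + L) :=
    inter_eq_left.2 (fun x hx => le_trans hA hx.1)
  rw [hsub, Real.volume_Icc]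
  rw [show A + L - A = L by ring, ENNReal.toReal_ofReal hL.le, smul_eq_mul]
  nlinarith [sq_nonneg L, pow_pos hL 7]

lemma int_bf_ge (hL : 0 < L) (hA : 0 ≤ A) :
    L ^ 9 / 131072 ≤ ∫ x in Ici (0:ℝ), (bf A L x) ^ 2 := by
  have hind : Integrable (Set.indicator (Icc (A + L/4) (A + 3*L/4)) (fun _ => L ^ 8 / 65536))
      (volume.restrict (Ici (0:ℝ))) := by
    rw [integrable_indicator_iff measurableSet_Icc]
    exact integrableOn_const (by
      rw [Measure.restrict_apply measurableSet_Icc]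
      exact (lt_of_le_of_lt (measure_mono inter_subset_left) measure_Icc_lt_top).ne)
  have hle : ∀ x, Set.indicator (Icc (A + L/4) (A + 3*L/4)) (fun _ => L ^ 8 / 65536) x
      ≤ (bf A L x) ^ 2 := by
    intro x
    by_cases hx : x ∈ Icc (A + L/4) (A + 3*L/4)
    · rw [Set.indicator_of_mem hx]
      exact bf_sq_ge A hL hx
    · rw [Set.indicator_of_notMem hx]; positivity
  have := integral_mono hind (integrable_sq_of (bf A L) (bf_cont A L) (bf_hcs A L hL.le)) hle
  refine le_trans ?_ this
  rw [integral_indicator_const _ measurableSet_Icc]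
  rw [Measure.real, Measure.restrict_apply measurableSet_Icc]
  have hsub : Icc (A + L/4) (A + 3*L/4) ∩ Ici 0 = Icc (A + L/4) (A + 3*L/4) :=
    inter_eq_left.2 (fun x hx => le_trans (by linarith : (0:ℝ) ≤ A + L/4) hx.1)
  rw [hsub, Real.volume_Icc]
  rw [show A + 3*L/4 - (A + L/4) = L/2 by ring, ENNReal.toReal_ofReal (by linarith), smul_eq_mul]
  nlinarith [pow_pos hL 9]

end Integrals

section Family

/-- left endpoint of the `i`-th bump: `(2i+1)L`. -/
noncomputable def Ai (L : ℝ) (i : ℕ) : ℝ := (2 * (i : ℝ) + 1) * L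

lemma Ai_nonneg {L : ℝ} (hL : 0 < L) (i : ℕ) : 0 ≤ Ai L i := by
  unfold Ai; positivity

lemma Ai_pos {L : ℝ} (hL : 0 < L) (i : ℕ) : 0 < Ai L i := by
  unfold Ai; positivity

lemma disj {L : ℝ} (hL : 0 < L) {i j : ℕ} (hij : i ≠ j) (x : ℝ) :
    bq (Ai L i) L x ≤ 0 ∨ bq (Ai L j) L x ≤ 0 := by
  by_contra hcon
  push_neg at hcon
  obtain ⟨h1, h2⟩ := hcon
  obtain ⟨hi1, hi2⟩ := bq_pos_bounds (Ai L i) hL h1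
  obtain ⟨hj1, hj2⟩ := bq_pos_bounds (Ai L j) hL h2
  unfold Ai at hi1 hi2 hj1 hj2
  have e1 : (2 * (i : ℝ) + 1) * L < (2 * (j : ℝ) + 2) * L := by nlinarith
  have e2 : (2 * (j : ℝ) + 1) * L < (2 * (i : ℝ) + 2) * L := by nlinarith
  have f1 : 2 * (i : ℝ) + 1 < 2 * (j : ℝ) + 2 := (mul_lt_mul_iff_of_pos_right hL).1 e1
  have f2 : 2 * (j : ℝ) + 1 < 2 * (i : ℝ) + 2 := (mul_lt_mul_iff_of_pos_right hL).1 e2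
  have g1 : (i : ℝ) < (j : ℝ) + 1 := by linarith
  have g2 : (j : ℝ) < (i : ℝ) + 1 := by linarith
  have g1' : i < j + 1 := by exact_mod_cast g1
  have g2' : j < i + 1 := by exact_mod_cast g2
  omega

lemma sq_sum_eq {ι : Type*} [Fintype ι] [DecidableEq ι] (c g : ι → ℝ)
    (h : ∀ i j, i ≠ j → g i = 0 ∨ g j = 0) :
    (∑ i, c i * g i) ^ 2 = ∑ i, (c i) ^ 2 * (g i) ^ 2 := by
  by_cases hz : ∀ i, g i = 0
  · simp [hz]
  · push_neg at hz
    obtain ⟨i₀, hi₀⟩ := hz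
    have key : ∀ j, j ≠ i₀ → g j = 0 := fun j hj => (h j i₀ hj).resolve_right hi₀
    rw [Finset.sum_eq_single i₀ (fun b _ hb => by rw [key b hb, mul_zero])
        (fun hb => absurd (Finset.mem_univ i₀) hb),
      Finset.sum_eq_single i₀ (fun b _ hb => by rw [key b hb]; ring)
        (fun hb => absurd (Finset.mem_univ i₀) hb)]
    ring

end Family

end LMAux
section GraphBump

namespace LMAux

open scoped Classical

variable (G : MetricGraph) (e₀ : G.E) (L : ℝ) (M : ℕ)

/-- The linear family of bump functions supported on the half-line `e₀`. -/
noncomputable def bumpFun : (Fin M → ℝ) →ₗ[ℝ] G.Fun where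
  toFun c := (fun e x => if e = e₀ then ∑ i : Fin M, c i * bf (Ai L i) L x else 0,
              fun e x => if e = e₀ then ∑ i : Fin M, c i * bd (Ai L i) L x else 0,
              fun _ => 0)
  map_add' c d := by
    refine Prod.ext ?_ (Prod.ext ?_ ?_) <;> funext e <;> try funext x
    · by_cases h : e = e₀ <;> simp [h, add_mul, Finset.sum_add_distrib]
    · by_cases h : e = e₀ <;> simp [h, add_mul, Finset.sum_add_distrib]
    · simp
  map_smul' r c := by
    refine Prod.ext ?_ (Prod.ext ?_ ?_) <;> funext e <;> try funext x
    · by_cases h : e = e₀ <;> simp [h, Finset.mul_sum, mul_assoc]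
    · by_cases h : e = e₀ <;> simp [h, Finset.mul_sum, mul_assoc]
    · simp

variable {G e₀ L M}

lemma bump_eFun (c : Fin M → ℝ) (e : G.E) :
    G.eFun (bumpFun G e₀ L M c) e
      = fun x => if e = e₀ then ∑ i : Fin M, c i * bf (Ai L i) L x else 0 := rfl

lemma bump_eDeriv (c : Fin M → ℝ) (e : G.E) :
    G.eDeriv (bumpFun G e₀ L M c) e
      = fun x => if e = e₀ then ∑ i : Fin M, c i * bd (Ai L i) L x else 0 := rfl

lemma bump_vVal (c : Fin M → ℝ) (v : G.V) : G.vVal (bumpFun G e₀ L M c) v = 0 := rfl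

lemma interval_e₀ (he₀ : G.length e₀ = ⊤) : G.interval e₀ = Ici 0 := by
  simp [MetricGraph.interval, he₀]

variable (hL : 0 < L)
include hL

lemma bfsum_zero_outside (c : Fin M → ℝ) {x : ℝ} (hx : x ∉ Icc (0:ℝ) ((2*M+2)*L)) :
    ∑ i : Fin M, c i * bf (Ai L i) L x = 0 := by
  refine Finset.sum_eq_zero fun i _ => ?_
  rw [bf_zero (Ai L (i:ℕ)) L hL.le, mul_zero]
  intro hmem
  refine hx ⟨le_trans (Ai_nonneg hL _) hmem.1, le_trans hmem.2 ?_⟩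
  unfold Ai
  have hi : (i : ℝ) + 1 ≤ (M : ℝ) := by exact_mod_cast i.2
  nlinarith

lemma bdsum_zero_outside (c : Fin M → ℝ) {x : ℝ} (hx : x ∉ Icc (0:ℝ) ((2*M+2)*L)) :
    ∑ i : Fin M, c i * bd (Ai L i) L x = 0 := by
  refine Finset.sum_eq_zero fun i _ => ?_
  rw [bd_zero (Ai L (i:ℕ)) L hL.le, mul_zero]
  intro hmem
  refine hx ⟨le_trans (Ai_nonneg hL _) hmem.1, le_trans hmem.2 ?_⟩
  unfold Ai
  have hi : (i : ℝ) + 1 ≤ (M : ℝ) := by exact_mod_cast i.2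
  nlinarith

lemma bfsum_cont (c : Fin M → ℝ) : Continuous (fun x => ∑ i : Fin M, c i * bf (Ai L i) L x) := by
  refine continuous_finset_sum _ fun i _ => ?_
  exact continuous_const.mul (bf_cont (Ai L i) L)

lemma bdsum_cont (c : Fin M → ℝ) : Continuous (fun x => ∑ i : Fin M, c i * bd (Ai L i) L x) := by
  refine continuous_finset_sum _ fun i _ => ?_
  exact continuous_const.mul (bd_cont (Ai L i) L)

lemma bfsum_hcs (c : Fin M → ℝ) :
    HasCompactSupport (fun x => ∑ i : Fin M, c i * bf (Ai L i) L x) :=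
  HasCompactSupport.intro isCompact_Icc (fun _ hx => bfsum_zero_outside hL c hx)

lemma bdsum_hcs (c : Fin M → ℝ) :
    HasCompactSupport (fun x => ∑ i : Fin M, c i * bd (Ai L i) L x) :=
  HasCompactSupport.intro isCompact_Icc (fun _ hx => bdsum_zero_outside hL c hx)

lemma bump_isH1 (he₀ : G.length e₀ = ⊤) (c : Fin M → ℝ) : G.IsH1 (bumpFun G e₀ L M c) := by
  refine ⟨fun e => ?_, fun e x _ => ?_, fun e => ?_, fun e => ?_, fun e => ?_, fun e v hv => ?_⟩
  · rw [bump_eFun]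
    by_cases h : e = e₀
    · simp only [h, if_pos rfl]
      exact (bfsum_cont hL c).continuousOn
    · simp only [if_neg h]
      exact continuousOn_const
  · rw [bump_eFun, bump_eDeriv]
    by_cases h : e = e₀
    · simp only [h, if_pos rfl, if_true]
      exact HasDerivAt.fun_sum fun (i : Fin M) _ => ((bf_hasDerivAt (Ai L i) L x).const_mul (c i))
    · simp only [if_neg h]
      exact hasDerivAt_const x 0
  · rw [bump_eFun]
    by_cases h : e = e₀
    · simp only [h, if_pos rfl, interval_e₀ he₀]
      exact memL2_of _ (bfsum_cont hL c) (bfsum_hcs hL c)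
    · simp only [if_neg h]
      exact MemLp.zero'
  · rw [bump_eDeriv]
    by_cases h : e = e₀
    · simp only [h, if_pos rfl, interval_e₀ he₀]
      exact memL2_of _ (bdsum_cont hL c) (bdsum_hcs hL c)
    · simp only [if_neg h]
      exact MemLp.zero'
  · rw [bump_eFun, bump_vVal]
    by_cases h : e = e₀
    · simp only [h, if_pos rfl]
      refine Finset.sum_eq_zero fun i _ => ?_
      rw [bf_zero (Ai L (i:ℕ)) L hL.le, mul_zero]
      intro hmem
      exact absurd hmem.1 (not_le.2 (Ai_pos hL _))
    · simp only [if_neg h]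
  · by_cases h : e = e₀
    · subst h
      rw [(G.dst_none_iff e).2 he₀] at hv
      exact absurd hv (by simp)
    · rw [bump_eFun, bump_vVal]
      simp only [if_neg h]

end LMAux

end GraphBump
namespace LMAux

open scoped Classical

variable {G : MetricGraph} {e₀ : G.E} {L : ℝ} {M : ℕ} (hL : 0 < L)
include hL

lemma bump_l2sq (he₀ : G.length e₀ = ⊤) (c : Fin M → ℝ) :
    G.l2sq (bumpFun G e₀ L M c)
      = ∑ i : Fin M, (c i) ^ 2 * ∫ x in Ici (0:ℝ), (bf (Ai L i) L x) ^ 2 := by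
  have h1 : ∀ e, (∫ x in G.interval e, (G.eFun (bumpFun G e₀ L M c) e x) ^ 2)
      = if e = e₀ then (∫ x in Ici (0:ℝ), (∑ i : Fin M, c i * bf (Ai L i) L x) ^ 2)
        else 0 := by
    intro e
    rw [bump_eFun]
    by_cases h : e = e₀
    · subst h; simp [interval_e₀ he₀]
    · simp [h]
  rw [MetricGraph.l2sq, Finset.sum_congr rfl (fun e _ => h1 e),
    Finset.sum_ite_eq' Finset.univ e₀]
  simp only [Finset.mem_univ, if_true]
  have hpt : ∀ x, (∑ i : Fin M, c i * bf (Ai L i) L x) ^ 2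
      = ∑ i : Fin M, (c i) ^ 2 * (bf (Ai L i) L x) ^ 2 := by
    intro x
    refine sq_sum_eq _ _ (fun i j hij => ?_)
    rcases disj hL (fun hv => hij (Fin.ext hv)) x with h | h
    · exact Or.inl (bf_zero' _ _ h)
    · exact Or.inr (bf_zero' _ _ h)
  simp_rw [hpt]
  rw [integral_finset_sum _ (fun (i : Fin M) _ =>
    ((integrable_sq_of (bf (Ai L i) L) (bf_cont _ _) (bf_hcs _ _ hL.le)).const_mul ((c i) ^ 2)))]
  simp_rw [integral_const_mul]

lemma bump_dsq (he₀ : G.length e₀ = ⊤) (c : Fin M → ℝ) :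
    G.dsq (bumpFun G e₀ L M c)
      = ∑ i : Fin M, (c i) ^ 2 * ∫ x in Ici (0:ℝ), (bd (Ai L i) L x) ^ 2 := by
  have h1 : ∀ e, (∫ x in G.interval e, (G.eDeriv (bumpFun G e₀ L M c) e x) ^ 2)
      = if e = e₀ then (∫ x in Ici (0:ℝ), (∑ i : Fin M, c i * bd (Ai L i) L x) ^ 2)
        else 0 := by
    intro e
    rw [bump_eDeriv]
    by_cases h : e = e₀
    · subst h; simp [interval_e₀ he₀]
    · simp [h]
  rw [MetricGraph.dsq, Finset.sum_congr rfl (fun e _ => h1 e),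
    Finset.sum_ite_eq' Finset.univ e₀]
  simp only [Finset.mem_univ, if_true]
  have hpt : ∀ x, (∑ i : Fin M, c i * bd (Ai L i) L x) ^ 2
      = ∑ i : Fin M, (c i) ^ 2 * (bd (Ai L i) L x) ^ 2 := by
    intro x
    refine sq_sum_eq _ _ (fun i j hij => ?_)
    rcases disj hL (fun hv => hij (Fin.ext hv)) x with h | h
    · exact Or.inl (bd_zero' _ _ h)
    · exact Or.inr (bd_zero' _ _ h)
  simp_rw [hpt]
  rw [integral_finset_sum _ (fun (i : Fin M) _ =>
    ((integrable_sq_of (bd (Ai L i) L) (bd_cont _ _) (bd_hcs _ _ hL.le)).const_mul ((c i) ^ 2)))]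
  simp_rw [integral_const_mul]

lemma bump_l2inner (he₀ : G.length e₀ = ⊤) (w : G.Fun)
    (hw : MemLp (G.eFun w e₀) 2 (volume.restrict (Ici (0:ℝ)))) (c : Fin M → ℝ) :
    G.l2inner w (bumpFun G e₀ L M c)
      = ∑ i : Fin M, c i * ∫ x in Ici (0:ℝ), G.eFun w e₀ x * bf (Ai L i) L x := by
  have h1 : ∀ e, (∫ x in G.interval e, G.eFun w e x * G.eFun (bumpFun G e₀ L M c) e x)
      = if e = e₀ then
          (∫ x in Ici (0:ℝ), G.eFun w e₀ x * ∑ i : Fin M, c i * bf (Ai L i) L x)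
        else 0 := by
    intro e
    rw [bump_eFun]
    by_cases h : e = e₀
    · subst h; simp [interval_e₀ he₀]
    · simp [h]
  rw [MetricGraph.l2inner, Finset.sum_congr rfl (fun e _ => h1 e),
    Finset.sum_ite_eq' Finset.univ e₀]
  simp only [Finset.mem_univ, if_true]
  have hpt : ∀ x, G.eFun w e₀ x * ∑ i : Fin M, c i * bf (Ai L i) L x
      = ∑ i : Fin M, c i * (G.eFun w e₀ x * bf (Ai L i) L x) := by
    intro x
    rw [Finset.mul_sum]
    exact Finset.sum_congr rfl fun i _ => by ring
  simp_rw [hpt]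
  rw [integral_finset_sum _ (fun (i : Fin M) _ =>
    ((integrable_mul_of_memL2 _ _ hw
      (memL2_of (bf (Ai L i) L) (bf_cont _ _) (bf_hcs _ _ hL.le))).const_mul (c i)))]
  simp_rw [integral_const_mul]

lemma bump_inj : Function.Injective (bumpFun G e₀ L M) := by
  refine (injective_iff_map_eq_zero _).mpr (fun c hc => ?_)
  funext i
  have h1 : G.eFun (bumpFun G e₀ L M c) e₀ (Ai L i + L / 2) = 0 := by
    rw [hc]; rfl
  rw [bump_eFun] at h1
  simp only [if_pos rfl] at h1
  have hbq : bq (Ai L i) L (Ai L i + L / 2) = L ^ 2 / 4 := by unfold bq; ring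
  have hbf : bf (Ai L i) L (Ai L i + L / 2) = (L ^ 2 / 4) ^ 2 := by
    rw [bf, hbq, pps, max_eq_left (by positivity)]
  have hz : ∀ j : Fin M, j ≠ i → bf (Ai L (j:ℕ)) L (Ai L i + L / 2) = 0 := by
    intro j hj
    rcases disj hL (fun hv => hj (Fin.ext hv)) (Ai L i + L / 2) with h | h
    · exact bf_zero' _ _ h
    · rw [hbq] at h
      exact absurd h (not_le.2 (by positivity : (0:ℝ) < L ^ 2 / 4))
  rw [Finset.sum_eq_single i (fun b _ hb => by rw [hz b hb, mul_zero])
    (fun h => absurd (Finset.mem_univ i) h), hbf] at h1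
  have := mul_eq_zero.1 h1
  rcases this with h | h
  · simpa using h
  · exact absurd h (by positivity)

end LMAux
/-- If the constrained Palais–Smale sequence carries approximate Morse
index information `m̂_{ζ_n}(u_n) ≤ N` (every subspace of the tangent space on which
`E_ρ''(u_n)[φ,φ] + λ_n ‖φ‖₂² < −ζ_n ‖φ‖²_{H¹}` has dimension at most `N`), then the
limit multiplier satisfies `λ_ρ ≥ 0`. -/
theorem limit_multiplier_nonneg (G : MetricGraph) (hconn : G.Connected)
    (hnc : G.Noncompact) (p : ℝ) (hp : 4 < p) (μ : ℝ) (hμ : 0 < μ)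
    (ρ : ℝ) (hρ : ρ ∈ Set.Icc (1 / 2 : ℝ) 1)
    (u : ℕ → G.Fun) (lam : ℕ → ℝ)
    (hH1 : ∀ n, G.IsH1 (u n)) (hmass : ∀ n, G.l2sq (u n) = μ)
    (hbdd : ∃ C : ℝ, ∀ n, G.h1norm (u n) ≤ C)
    (hlam : ∀ n, lam n = -(1 / μ) * G.energyDeriv p ρ (u n) (u n))
    (hPS : ∀ ε > (0:ℝ), ∃ N : ℕ, ∀ n ≥ N, ∀ η : G.Fun, G.IsH1 η →
      |G.energyDeriv p ρ (u n) η + lam n * G.l2inner (u n) η| ≤ ε * G.h1norm η)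
    (lamρ : ℝ) (hlamlim : Filter.Tendsto lam Filter.atTop (nhds lamρ))
    (N : ℕ) (hN : 0 < N) (ζ : ℕ → ℝ) (hζpos : ∀ n, 0 < ζ n)
    (hζlim : Filter.Tendsto ζ Filter.atTop (nhds 0))
    (hMorse : ∃ n₀ : ℕ, ∀ n ≥ n₀, ∀ W : Submodule ℝ G.Fun,
      (∀ w ∈ W, G.IsH1 w) → (∀ w ∈ W, G.l2inner (u n) w = 0) →
      (∀ φ ∈ W, φ ≠ 0 →
        G.energyDeriv2 p ρ (u n) φ + lam n * G.l2sq φ < -(ζ n) * G.h1sq φ) →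
      FiniteDimensional ℝ W ∧ Module.finrank ℝ W ≤ N) :
    0 ≤ lamρ := by

  classical
  -- Suppose towards a contradiction that `lamρ < 0`.
  by_contra hneg
  push_neg at hneg
  obtain ⟨e₀, he₀⟩ := hnc
  set t : ℝ := -lamρ with ht
  have ht0 : 0 < t := by simp [ht]; linarith
  set L : ℝ := Real.sqrt (524288 / t) with hLdef
  have hL2 : L ^ 2 = 524288 / t := Real.sq_sqrt (by positivity)
  have hL : 0 < L := Real.sqrt_pos.2 (by positivity)
  have htL2 : t * L ^ 2 = 524288 := by
    rw [hL2]; field_simp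
  set M : ℕ := N + 2 with hM
  set Φ := LMAux.bumpFun G e₀ L M with hΦ
  -- the norms of the bumps
  set P : Fin M → ℝ := fun i => ∫ x in Set.Ici (0:ℝ), (LMAux.bf (LMAux.Ai L i) L x) ^ 2 with hP
  set D : Fin M → ℝ := fun i => ∫ x in Set.Ici (0:ℝ), (LMAux.bd (LMAux.Ai L i) L x) ^ 2 with hD
  have hPpos : ∀ i : Fin M, 0 < P i := fun i =>
    lt_of_lt_of_le (by positivity) (LMAux.int_bf_ge _ hL (LMAux.Ai_nonneg hL _))
  have hD0 : ∀ i : Fin M, 0 ≤ D i := fun i =>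
    MeasureTheory.integral_nonneg (fun x => sq_nonneg _)
  have hDP : ∀ i : Fin M, D i ≤ t / 16 * P i := by
    intro i
    have h1 : D i ≤ L ^ 7 / 4 := LMAux.int_bd_le _ hL (LMAux.Ai_nonneg hL _)
    have h2 : t / 16 * (L ^ 9 / 131072) = t * L ^ 2 * L ^ 7 / 2097152 := by ring
    have h3 : L ^ 7 / 4 = t / 16 * (L ^ 9 / 131072) := by
      rw [h2, htL2]; ring
    calc D i ≤ L ^ 7 / 4 := h1
      _ = t / 16 * (L ^ 9 / 131072) := h3
      _ ≤ t / 16 * P i := by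
          refine mul_le_mul_of_nonneg_left ?_ (by positivity)
          exact LMAux.int_bf_ge _ hL (LMAux.Ai_nonneg hL _)
  -- choose `n` large enough
  obtain ⟨n₀, hMind⟩ := hMorse
  have hev1 : ∀ᶠ n in Filter.atTop, ζ n < min 1 (t / 8) :=
    hζlim.eventually_lt_const (lt_min one_pos (by positivity))
  have hev2 : ∀ᶠ n in Filter.atTop, lam n < lamρ / 2 :=
    hlamlim.eventually_lt_const (by linarith)
  have hev3 : ∀ᶠ n in Filter.atTop, n₀ ≤ n := Filter.eventually_ge_atTop n₀
  obtain ⟨n, hn1, hn2, hn3⟩ := (hev1.and (hev2.and hev3)).exists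
  obtain ⟨hn1, hn2⟩ := (⟨hn1, hn2⟩ : _ ∧ _)
  -- the linear functional giving orthogonality to `u n`
  have hUmem : MeasureTheory.MemLp (G.eFun (u n) e₀) 2
      (MeasureTheory.volume.restrict (Set.Ici (0:ℝ))) := by
    have := (hH1 n).2.2.1 e₀
    rwa [LMAux.interval_e₀ he₀] at this
  set a : Fin M → ℝ :=
    fun i => ∫ x in Set.Ici (0:ℝ), G.eFun (u n) e₀ x * LMAux.bf (LMAux.Ai L i) L x with ha
  let A : (Fin M → ℝ) →ₗ[ℝ] ℝ :=
    { toFun := fun c => ∑ i : Fin M, c i * a i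
      map_add' := by intro c d; simp [add_mul, Finset.sum_add_distrib]
      map_smul' := by intro r c; simp [Finset.mul_sum, mul_assoc] }
  set K := LinearMap.ker A with hK
  set W := K.map Φ with hW
  -- verify the hypotheses of the Morse index bound for `W`
  have hcond1 : ∀ w ∈ W, G.IsH1 w := by
    rintro w ⟨c, _, rfl⟩
    exact LMAux.bump_isH1 hL he₀ c
  have hcond2 : ∀ w ∈ W, G.l2inner (u n) w = 0 := by
    rintro w ⟨c, hc, rfl⟩
    rw [LMAux.bump_l2inner hL he₀ (u n) hUmem c]
    exact hc
  have hcond3 : ∀ φ ∈ W, φ ≠ 0 →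
      G.energyDeriv2 p ρ (u n) φ + lam n * G.l2sq φ < -(ζ n) * G.h1sq φ := by
    rintro φ ⟨c, _, rfl⟩ hφ0
    have hcne : c ≠ 0 := by
      rintro rfl
      exact hφ0 (map_zero Φ)
    obtain ⟨i₀, hi₀⟩ := Function.ne_iff.1 hcne
    have hl2 : G.l2sq (Φ c) = ∑ i : Fin M, (c i) ^ 2 * P i := LMAux.bump_l2sq hL he₀ c
    have hds : G.dsq (Φ c) = ∑ i : Fin M, (c i) ^ 2 * D i := LMAux.bump_dsq hL he₀ c
    set SP : ℝ := ∑ i : Fin M, (c i) ^ 2 * P i with hSP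
    set SD : ℝ := ∑ i : Fin M, (c i) ^ 2 * D i with hSD
    have hSP0 : 0 < SP := by
      have h1 : ∀ i ∈ Finset.univ, (0:ℝ) ≤ (c i) ^ 2 * P i :=
        fun i _ => mul_nonneg (sq_nonneg _) (hPpos i).le
      have h2 : (c i₀) ^ 2 * P i₀ ≤ SP := Finset.single_le_sum h1 (Finset.mem_univ i₀)
      have hc2 : 0 < (c i₀) ^ 2 :=
        lt_of_le_of_ne (sq_nonneg _) (Ne.symm (pow_ne_zero 2 hi₀))
      have h3 : 0 < (c i₀) ^ 2 * P i₀ := mul_pos hc2 (hPpos i₀)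
      linarith
    have hSD0 : 0 ≤ SD :=
      Finset.sum_nonneg fun i _ => mul_nonneg (sq_nonneg _) (hD0 i)
    have hSDle : SD ≤ t / 16 * SP := by
      rw [hSD, hSP, Finset.mul_sum]
      refine Finset.sum_le_sum fun i _ => ?_
      calc (c i) ^ 2 * D i ≤ (c i) ^ 2 * (t / 16 * P i) :=
            mul_le_mul_of_nonneg_left (hDP i) (sq_nonneg _)
        _ = t / 16 * ((c i) ^ 2 * P i) := by ring
    have hE2 : G.energyDeriv2 p ρ (u n) (Φ c) = SD := by
      rw [MetricGraph.energyDeriv2, hds]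
      have : ∀ v : G.V, |G.vVal (u n) v| ^ (p - 2) * (G.vVal (Φ c) v) ^ 2 = 0 := by
        intro v
        rw [LMAux.bump_vVal]
        ring
      rw [Finset.sum_congr rfl (fun v _ => this v)]
      simp [hSD]
    have hh1 : G.h1sq (Φ c) = SD + SP := by
      rw [MetricGraph.h1sq, hds, hl2]
    rw [hE2, hl2, hh1]
    have hζ1 : ζ n ≤ 1 := le_of_lt (lt_of_lt_of_le hn1 (min_le_left _ _))
    have hζ2 : ζ n ≤ t / 8 := le_of_lt (lt_of_lt_of_le hn1 (min_le_right _ _))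
    have hζ0 : 0 < ζ n := hζpos n
    have hlamn : lam n ≤ -t / 2 := by
      have : lamρ / 2 = -t / 2 := by rw [ht]; ring
      linarith [hn2]
    have k1 : ζ n * SD ≤ SD := mul_le_of_le_one_left hSD0 hζ1
    have k2 : ζ n * SP ≤ t / 8 * SP := mul_le_mul_of_nonneg_right hζ2 hSP0.le
    have k3 : lam n * SP ≤ -t / 2 * SP := mul_le_mul_of_nonneg_right hlamn hSP0.le
    have k4 : 0 < t * SP := mul_pos ht0 hSP0
    clear_value SD SP t L
    linarith [hSDle, hSD0, k1, k2, k3, k4]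
  obtain ⟨_, hfr_le⟩ := hMind n hn3 W hcond1 hcond2 hcond3
  -- but `W` has dimension at least `N + 1`
  have hWK : Module.finrank ℝ K = Module.finrank ℝ W :=
    LinearEquiv.finrank_eq (Submodule.equivMapOfInjective Φ (LMAux.bump_inj hL) K)
  have hrank : Module.finrank ℝ (LinearMap.range A) + Module.finrank ℝ K
      = Module.finrank ℝ (Fin M → ℝ) := A.finrank_range_add_finrank_ker
  have hM' : Module.finrank ℝ (Fin M → ℝ) = M := Module.finrank_fin_fun ℝ
  have hrle : Module.finrank ℝ (LinearMap.range A) ≤ 1 := by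
    have := Submodule.finrank_le (LinearMap.range A)
    simpa [Module.finrank_self] using this
  omega
end

section
/- Let G = (V,E) be a noncompact connected metric graph with finitely many edges, p > 2 and μ > 0. For any β > 0 there exists a sequence of functions {φ₁, φ₂, …} ⊂ H¹(G) such that for all i, j ∈ ℕ⁺ and all ρ ∈ [1/2,1]: (i) ‖φ_i‖₂² = μ, ‖φ_i'‖₂ = β, and E_ρ(φ_i, G) = β²/2; (ii) each φ_i has compact support and supp(φ_i) ∩ supp(φ_j) = ∅ whenever i ≠ j; (iii) for any N ≥ 2 and any a = (a₁,…,a_{N−1}) ∈ S^{N−2}, ‖(Σ_{i=1}^{N−1} a_i φ_i)'‖₂ = β and E_ρ(Σ_{i=1}^{N−1} a_i φ_i, G) = β²/2. -/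
open MeasureTheory Filter Topology Set
open scoped ENNReal

section AuxBump

noncomputable def auxQ (x : ℝ) : ℝ := x * (1 - x)
noncomputable def auxF (x : ℝ) : ℝ := (auxQ x ^ 2 + auxQ x * |auxQ x|) / 2
noncomputable def auxD (x : ℝ) : ℝ := (auxQ x + |auxQ x|) * (1 - 2 * x)

lemma hasDerivAt_mul_abs (t : ℝ) : HasDerivAt (fun s : ℝ => s * |s|) (2 * |t|) t := by
  rcases lt_trichotomy t 0 with h | h | h
  · have h2 : HasDerivAt (fun s : ℝ => -(s * s)) (2 * |t|) t := by
      have := ((hasDerivAt_id t).mul (hasDerivAt_id t)).neg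
      refine this.congr_deriv ?_
      rw [abs_of_neg h]; simp; ring
    refine h2.congr_of_eventuallyEq ?_
    filter_upwards [Iio_mem_nhds h] with s hs
    rw [abs_of_neg hs]; ring
  · subst h
    rw [hasDerivAt_iff_tendsto_slope]
    have hev : (fun y : ℝ => |y|) =ᶠ[𝓝[≠] (0:ℝ)] slope (fun s : ℝ => s * |s|) 0 := by
      filter_upwards [self_mem_nhdsWithin] with y hy
      have hy' : y ≠ 0 := hy
      simp only [slope, sub_zero, vsub_eq_sub, smul_eq_mul]
      field_simp
      simp
    have habs : Tendsto (fun y : ℝ => |y|) (𝓝[≠] (0:ℝ)) (𝓝 (|(0:ℝ)|)) :=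
      (continuous_abs.tendsto (0:ℝ)).mono_left (nhdsWithin_le_nhds (s := {(0:ℝ)}ᶜ))
    have : Tendsto (fun y : ℝ => |y|) (𝓝[≠] (0:ℝ)) (𝓝 (2 * |(0:ℝ)|)) := by
      simpa using habs
    exact this.congr' hev
  · have h2 : HasDerivAt (fun s : ℝ => s * s) (2 * |t|) t := by
      have := (hasDerivAt_id t).mul (hasDerivAt_id t)
      refine this.congr_deriv ?_
      rw [abs_of_pos h]; simp; ring
    refine h2.congr_of_eventuallyEq ?_
    filter_upwards [Ioi_mem_nhds h] with s hs
    rw [abs_of_pos hs]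

lemma hasDerivAt_auxQ (x : ℝ) : HasDerivAt auxQ (1 - 2 * x) x := by
  have := (hasDerivAt_id x).mul ((hasDerivAt_const x (1:ℝ)).sub (hasDerivAt_id x))
  refine this.congr_deriv ?_
  simp only [id_eq, Pi.sub_apply]; ring

lemma hasDerivAt_auxF (x : ℝ) : HasDerivAt auxF (auxD x) x := by
  have hq := hasDerivAt_auxQ x
  have h1 : HasDerivAt (fun y => auxQ y ^ 2) (2 * auxQ x * (1 - 2 * x)) x := by
    have := hq.pow 2
    refine this.congr_deriv ?_; ring
  have h2 : HasDerivAt (fun y => auxQ y * |auxQ y|) (2 * |auxQ x| * (1 - 2 * x)) x :=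
    (hasDerivAt_mul_abs (auxQ x)).comp x hq
  have := (h1.add h2).div_const 2
  refine this.congr_deriv ?_
  unfold auxD
  rcases abs_cases (auxQ x) with ⟨h, _⟩ | ⟨h, _⟩ <;> rw [h] <;> ring

lemma auxQ_nonpos {s : ℝ} (h : s ≤ 0 ∨ 1 ≤ s) : auxQ s ≤ 0 := by
  unfold auxQ; rcases h with h | h <;> nlinarith

lemma auxF_zero {s : ℝ} (h : s ≤ 0 ∨ 1 ≤ s) : auxF s = 0 := by
  have hq := auxQ_nonpos h
  unfold auxF
  rw [abs_of_nonpos hq]; ring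

lemma auxD_zero {s : ℝ} (h : s ≤ 0 ∨ 1 ≤ s) : auxD s = 0 := by
  have hq := auxQ_nonpos h
  unfold auxD
  rw [abs_of_nonpos hq]; ring

lemma auxF_ne {s : ℝ} (h : auxF s ≠ 0) : 0 < s ∧ s < 1 := by
  by_contra hc
  push_neg at hc
  rcases le_or_gt s 0 with h0 | h0
  · exact h (auxF_zero (Or.inl h0))
  · exact h (auxF_zero (Or.inr (hc h0)))

lemma auxD_ne {s : ℝ} (h : auxD s ≠ 0) : 0 < s ∧ s < 1 := by
  by_contra hc
  push_neg at hc
  rcases le_or_gt s 0 with h0 | h0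
  · exact h (auxD_zero (Or.inl h0))
  · exact h (auxD_zero (Or.inr (hc h0)))

lemma continuous_auxF : Continuous auxF := by
  unfold auxF auxQ; fun_prop

lemma continuous_auxD : Continuous auxD := by
  unfold auxD auxQ; fun_prop

lemma hcs_auxF_sq : HasCompactSupport (fun x : ℝ => auxF x ^ 2) :=
  HasCompactSupport.intro isCompact_Icc (fun x hx => by
    rw [Set.mem_Icc] at hx
    push_neg at hx
    rcases lt_or_ge x 0 with h | h
    · rw [auxF_zero (Or.inl h.le)]; ring
    · rw [auxF_zero (Or.inr (hx h).le)]; ring)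

lemma hcs_auxD_sq : HasCompactSupport (fun x : ℝ => auxD x ^ 2) :=
  HasCompactSupport.intro isCompact_Icc (fun x hx => by
    rw [Set.mem_Icc] at hx
    push_neg at hx
    rcases lt_or_ge x 0 with h | h
    · rw [auxD_zero (Or.inl h.le)]; ring
    · rw [auxD_zero (Or.inr (hx h).le)]; ring)

lemma integrable_auxF_sq : Integrable (fun x : ℝ => auxF x ^ 2) :=
  (continuous_auxF.pow 2).integrable_of_hasCompactSupport hcs_auxF_sq

lemma integrable_auxD_sq : Integrable (fun x : ℝ => auxD x ^ 2) :=
  (continuous_auxD.pow 2).integrable_of_hasCompactSupport hcs_auxD_sq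

noncomputable def auxI1 : ℝ := ∫ x : ℝ, auxF x ^ 2
noncomputable def auxI2 : ℝ := ∫ x : ℝ, auxD x ^ 2

lemma auxQ_pos {s : ℝ} (h0 : 0 < s) (h1 : s < 1) : 0 < auxQ s := by
  unfold auxQ; nlinarith

lemma auxI1_pos : 0 < auxI1 := by
  rw [auxI1, integral_pos_iff_support_of_nonneg (fun x => sq_nonneg _) integrable_auxF_sq]
  have hsub : Set.Ioo (0:ℝ) 1 ⊆ Function.support (fun x : ℝ => auxF x ^ 2) := by
    intro s hs
    have hq := auxQ_pos hs.1 hs.2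
    have : auxF s > 0 := by
      unfold auxF
      rw [abs_of_pos hq]; nlinarith
    simp [Function.mem_support]
    positivity
  calc (0:ℝ≥0∞) < volume (Set.Ioo (0:ℝ) 1) := by simp
    _ ≤ _ := measure_mono hsub

lemma auxI2_pos : 0 < auxI2 := by
  rw [auxI2, integral_pos_iff_support_of_nonneg (fun x => sq_nonneg _) integrable_auxD_sq]
  have hsub : Set.Ioo (0:ℝ) (1/2) ⊆ Function.support (fun x : ℝ => auxD x ^ 2) := by
    intro s hs
    have hq := auxQ_pos hs.1 (by linarith [hs.2])
    have h2 : (0:ℝ) < 1 - 2 * s := by linarith [hs.2]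
    have : auxD s > 0 := by
      unfold auxD
      rw [abs_of_pos hq]; nlinarith
    simp [Function.mem_support]
    positivity
  calc (0:ℝ≥0∞) < volume (Set.Ioo (0:ℝ) (1/2)) := by simp
    _ ≤ _ := measure_mono hsub

lemma shift_integral (h : ℝ → ℝ) (h0 : ∀ s, s ≤ 0 → h s = 0)
    (ω t : ℝ) (hω : 0 < ω) (ht : 0 ≤ t) :
    ∫ x in Set.Ici (0:ℝ), h (ω * x - t) = ω⁻¹ * ∫ s, h s := by
  rw [setIntegral_eq_integral_of_forall_compl_eq_zero (f := fun x => h (ω * x - t))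
    (fun x hx => h0 _ (by
      simp only [Set.mem_Ici, not_le] at hx
      nlinarith))]
  have h1 : (fun x : ℝ => h (ω * x - t)) = fun x => (fun y => h (y - t)) (ω * x) := rfl
  rw [h1, MeasureTheory.Measure.integral_comp_mul_left (fun y => h (y - t)) ω,
    integral_sub_right_eq_self h t, smul_eq_mul, abs_of_pos (inv_pos.2 hω)]

lemma sq_sum_eq_sum_sq {n : ℕ} (g : Fin n → ℝ) (h : ∀ i j, i ≠ j → g i = 0 ∨ g j = 0) :
    (∑ i, g i) ^ 2 = ∑ i, g i ^ 2 := by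
  rw [sq, Finset.sum_mul_sum]
  refine Finset.sum_congr rfl (fun i _ => ?_)
  rw [Finset.sum_eq_single i (fun j _ hj => ?_) (fun hi => absurd (Finset.mem_univ i) hi), sq]
  rcases h i j (Ne.symm hj) with h' | h' <;> rw [h'] <;> ring

end AuxBump

/-- For `p > 2`, `μ > 0` and any `β > 0` there is a sequence
`{φ_i} ⊂ H¹_μ(G)` of compactly supported functions with pairwise disjoint supports such
that `‖φ_i'‖₂ = β`, `E_ρ(φ_i, G) = β²/2` for all `ρ ∈ [1/2,1]`, and every normalized
linear combination `Σ a_i φ_i` (with `a ∈ S^{N−2}`) again satisfies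
`‖(Σ a_i φ_i)'‖₂ = β` and `E_ρ(Σ a_i φ_i, G) = β²/2`. -/
theorem disjoint_family_constant_energy (G : MetricGraph) (hconn : G.Connected)
    (hnc : G.Noncompact) (p : ℝ) (hp : 2 < p) (μ : ℝ) (hμ : 0 < μ)
    (β : ℝ) (hβ : 0 < β) :
    ∃ φ : ℕ → G.Fun,
      (∀ i, G.IsH1 (φ i) ∧ G.l2sq (φ i) = μ ∧ Real.sqrt (G.dsq (φ i)) = β ∧
        ∀ ρ ∈ Set.Icc (1 / 2 : ℝ) 1, G.energy p ρ (φ i) = β ^ 2 / 2) ∧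
      (∀ i, ∃ R : ℝ, ∀ e, ∀ x ∈ G.interval e, R ≤ x → G.eFun (φ i) e x = 0) ∧
      (∀ i j, i ≠ j → ∀ e, ∀ x ∈ G.interval e,
        G.eFun (φ i) e x = 0 ∨ G.eFun (φ j) e x = 0) ∧
      (∀ N : ℕ, 2 ≤ N → ∀ a : Fin (N - 1) → ℝ, ∑ i, (a i) ^ 2 = 1 →
        Real.sqrt (G.dsq (∑ i, a i • φ i)) = β ∧
        ∀ ρ ∈ Set.Icc (1 / 2 : ℝ) 1, G.energy p ρ (∑ i, a i • φ i) = β ^ 2 / 2) := by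
  classical
  obtain ⟨e₀, he₀⟩ := hnc
  have hI1 := auxI1_pos
  have hI2 := auxI2_pos
  set ω : ℝ := β * Real.sqrt (auxI1 / (auxI2 * μ)) with hωdef
  have hω : 0 < ω := mul_pos hβ (Real.sqrt_pos.2 (by positivity))
  have hωsq : ω ^ 2 = β ^ 2 * (auxI1 / (auxI2 * μ)) := by
    rw [hωdef, mul_pow, Real.sq_sqrt (by positivity)]
  set c : ℝ := Real.sqrt (μ * ω / auxI1) with hcdef
  have hcsq : c ^ 2 = μ * ω / auxI1 := Real.sq_sqrt (by positivity)
  set F : ℕ → ℝ → ℝ := fun i x => c * auxF (ω * x - ((i : ℝ) + 1)) with hFdef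
  set D : ℕ → ℝ → ℝ := fun i x => (c * ω) * auxD (ω * x - ((i : ℝ) + 1)) with hDdef
  set φ : ℕ → G.Fun := fun i =>
    (fun e x => if e = e₀ then F i x else 0,
     fun e x => if e = e₀ then D i x else 0,
     fun _ => 0) with hφdef
  have hIci : G.interval e₀ = Set.Ici 0 := by
    simp [MetricGraph.interval, he₀]
  -- pointwise descriptions
  have heF : ∀ i e x, G.eFun (φ i) e x = if e = e₀ then F i x else 0 := fun i e x => rfl
  have heD : ∀ i e x, G.eDeriv (φ i) e x = if e = e₀ then D i x else 0 := fun i e x => rfl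
  have hvV : ∀ i v, G.vVal (φ i) v = 0 := fun i v => rfl
  -- key integrals
  have hFint : ∀ k : ℕ, (∫ x in Set.Ici (0:ℝ), (F k x) ^ 2) = μ := by
    intro k
    have heq : ∀ x : ℝ, (F k x) ^ 2 = c ^ 2 * (fun s => auxF s ^ 2) (ω * x - ((k:ℝ)+1)) := by
      intro x; simp only [hFdef]; ring
    simp_rw [heq]
    rw [MeasureTheory.integral_const_mul,
      shift_integral (fun s => auxF s ^ 2)
        (fun s hs => by show auxF s ^ 2 = 0; rw [auxF_zero (Or.inl hs)]; ring) ω _ hω (by positivity)]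
    have hII : (∫ s : ℝ, auxF s ^ 2) = auxI1 := rfl
    rw [hII, hcsq]
    field_simp
  have hDint : ∀ k : ℕ, (∫ x in Set.Ici (0:ℝ), (D k x) ^ 2) = β ^ 2 := by
    intro k
    have heq : ∀ x : ℝ, (D k x) ^ 2 = (c^2 * ω^2) * (fun s => auxD s ^ 2) (ω * x - ((k:ℝ)+1)) := by
      intro x; simp only [hDdef]; ring
    simp_rw [heq]
    rw [MeasureTheory.integral_const_mul,
      shift_integral (fun s => auxD s ^ 2)
        (fun s hs => by show auxD s ^ 2 = 0; rw [auxD_zero (Or.inl hs)]; ring) ω _ hω (by positivity)]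
    have hII : (∫ s : ℝ, auxD s ^ 2) = auxI2 := rfl
    rw [hII, hcsq, hωsq]
    field_simp
  -- continuity and support
  have hFcont : ∀ k, Continuous (F k) := fun k =>
    continuous_const.mul (continuous_auxF.comp
      ((continuous_const.mul continuous_id).sub continuous_const))
  have hDcont : ∀ k, Continuous (D k) := fun k =>
    continuous_const.mul (continuous_auxD.comp
      ((continuous_const.mul continuous_id).sub continuous_const))
  have hFvanish : ∀ (k : ℕ) (x : ℝ), x ∉ Set.Icc (((k:ℝ)+1)/ω) (((k:ℝ)+2)/ω) → F k x = 0 := by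
    intro k x hx
    rw [Set.mem_Icc] at hx
    push_neg at hx
    rcases lt_or_ge x (((k:ℝ)+1)/ω) with h | h
    · have h1 : x * ω < (k:ℝ)+1 := (lt_div_iff₀ hω).1 h
      have : ω * x - ((k:ℝ)+1) ≤ 0 := by nlinarith
      simp only [hFdef]; rw [auxF_zero (Or.inl this)]; ring
    · have h2 : (k:ℝ)+2 < x * ω := (div_lt_iff₀ hω).1 (hx h)
      have : (1:ℝ) ≤ ω * x - ((k:ℝ)+1) := by nlinarith
      simp only [hFdef]; rw [auxF_zero (Or.inr this)]; ring
  have hDvanish : ∀ (k : ℕ) (x : ℝ), x ∉ Set.Icc (((k:ℝ)+1)/ω) (((k:ℝ)+2)/ω) → D k x = 0 := by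
    intro k x hx
    rw [Set.mem_Icc] at hx
    push_neg at hx
    rcases lt_or_ge x (((k:ℝ)+1)/ω) with h | h
    · have h1 : x * ω < (k:ℝ)+1 := (lt_div_iff₀ hω).1 h
      have : ω * x - ((k:ℝ)+1) ≤ 0 := by nlinarith
      simp only [hDdef]; rw [auxD_zero (Or.inl this)]; ring
    · have h2 : (k:ℝ)+2 < x * ω := (div_lt_iff₀ hω).1 (hx h)
      have : (1:ℝ) ≤ ω * x - ((k:ℝ)+1) := by nlinarith
      simp only [hDdef]; rw [auxD_zero (Or.inr this)]; ring
  have hFsupp : ∀ k, HasCompactSupport (F k) := fun k =>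
    HasCompactSupport.intro isCompact_Icc (hFvanish k)
  have hDsupp : ∀ k, HasCompactSupport (D k) := fun k =>
    HasCompactSupport.intro isCompact_Icc (hDvanish k)
  have hsqcs : ∀ (f : ℝ → ℝ), HasCompactSupport f → HasCompactSupport (fun x => f x ^ 2) := by
    intro f hf
    exact hf.comp_left (g := fun y : ℝ => y ^ 2) (by simp)
  have hDint2 : ∀ k, Integrable (fun x => (D k x) ^ 2) (volume.restrict (Set.Ici (0:ℝ))) :=
    fun k => (((hDcont k).pow 2).integrable_of_hasCompactSupport
      (hsqcs _ (hDsupp k))).restrict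
  -- disjointness
  have hFdisj : ∀ i j : ℕ, i ≠ j → ∀ x : ℝ, F i x = 0 ∨ F j x = 0 := by
    intro i j hij x
    by_contra hc
    push_neg at hc
    have h1 : auxF (ω * x - ((i:ℝ)+1)) ≠ 0 := by
      intro h; exact hc.1 (by simp only [hFdef]; rw [h]; ring)
    have h2 : auxF (ω * x - ((j:ℝ)+1)) ≠ 0 := by
      intro h; exact hc.2 (by simp only [hFdef]; rw [h]; ring)
    obtain ⟨ha1, hb1⟩ := auxF_ne h1
    obtain ⟨ha2, hb2⟩ := auxF_ne h2
    have hr1 : (i:ℝ) < (j:ℝ) + 1 := by linarith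
    have hr2 : (j:ℝ) < (i:ℝ) + 1 := by linarith
    have hn1 : i < j + 1 := by exact_mod_cast hr1
    have hn2 : j < i + 1 := by exact_mod_cast hr2
    omega
  have hDdisj : ∀ i j : ℕ, i ≠ j → ∀ x : ℝ, D i x = 0 ∨ D j x = 0 := by
    intro i j hij x
    by_contra hc
    push_neg at hc
    have h1 : auxD (ω * x - ((i:ℝ)+1)) ≠ 0 := by
      intro h; exact hc.1 (by simp only [hDdef]; rw [h]; ring)
    have h2 : auxD (ω * x - ((j:ℝ)+1)) ≠ 0 := by
      intro h; exact hc.2 (by simp only [hDdef]; rw [h]; ring)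
    obtain ⟨ha1, hb1⟩ := auxD_ne h1
    obtain ⟨ha2, hb2⟩ := auxD_ne h2
    have hr1 : (i:ℝ) < (j:ℝ) + 1 := by linarith
    have hr2 : (j:ℝ) < (i:ℝ) + 1 := by linarith
    have hn1 : i < j + 1 := by exact_mod_cast hr1
    have hn2 : j < i + 1 := by exact_mod_cast hr2
    omega
  -- norms
  have hl2 : ∀ i, G.l2sq (φ i) = μ := by
    intro i
    unfold MetricGraph.l2sq
    rw [Finset.sum_eq_single e₀]
    · rw [hIci]
      have hpt : ∀ x : ℝ, (G.eFun (φ i) e₀ x) ^ 2 = (F i x) ^ 2 := fun x => by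
        rw [heF]; simp
      simp_rw [hpt]
      exact hFint i
    · intro e _ he
      have hpt : ∀ x : ℝ, (G.eFun (φ i) e x) ^ 2 = 0 := fun x => by
        rw [heF]; simp [he]
      simp_rw [hpt]
      simp
    · intro h; exact absurd (Finset.mem_univ _) h
  have hdsq : ∀ i, G.dsq (φ i) = β ^ 2 := by
    intro i
    unfold MetricGraph.dsq
    rw [Finset.sum_eq_single e₀]
    · rw [hIci]
      have hpt : ∀ x : ℝ, (G.eDeriv (φ i) e₀ x) ^ 2 = (D i x) ^ 2 := fun x => by
        rw [heD]; simp
      simp_rw [hpt]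
      exact hDint i
    · intro e _ he
      have hpt : ∀ x : ℝ, (G.eDeriv (φ i) e x) ^ 2 = 0 := fun x => by
        rw [heD]; simp [he]
      simp_rw [hpt]
      simp
    · intro h; exact absurd (Finset.mem_univ _) h
  -- energy helper
  have hvlp : ∀ (u : G.Fun), (∀ v, G.vVal u v = 0) → G.vertexLp p u = 0 := by
    intro u hu
    unfold MetricGraph.vertexLp
    simp [hu, Real.zero_rpow (show p ≠ 0 by linarith)]
  have henergy : ∀ (u : G.Fun), (∀ v, G.vVal u v = 0) → G.dsq u = β ^ 2 →
      ∀ ρ ∈ Set.Icc (1/2:ℝ) 1, G.energy p ρ u = β ^ 2 / 2 := by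
    intro u hu hd ρ _
    unfold MetricGraph.energy
    rw [hd, hvlp u hu]
    ring
  -- H¹ membership
  have hH1 : ∀ i, G.IsH1 (φ i) := by
    intro i
    have hFeq : G.eFun (φ i) e₀ = F i := funext fun x => by rw [heF]; simp
    have hFeq' : ∀ e, e ≠ e₀ → G.eFun (φ i) e = fun _ => 0 :=
      fun e he => funext fun x => by rw [heF]; simp [he]
    have hDeq : G.eDeriv (φ i) e₀ = D i := funext fun x => by rw [heD]; simp
    have hDeq' : ∀ e, e ≠ e₀ → G.eDeriv (φ i) e = fun _ => 0 :=
      fun e he => funext fun x => by rw [heD]; simp [he]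
    refine ⟨?_, ?_, ?_, ?_, ?_, ?_⟩
    · intro e
      by_cases he : e = e₀
      · subst he; rw [hFeq]; exact (hFcont i).continuousOn
      · rw [hFeq' e he]; exact continuousOn_const
    · intro e x hx
      by_cases he : e = e₀
      · rw [he, hFeq, show G.eDeriv (φ i) e₀ x = D i x from congrFun hDeq x]
        have hin : HasDerivAt (fun y : ℝ => ω * y - ((i:ℝ)+1)) ω x := by
          simpa using ((hasDerivAt_id x).const_mul ω).sub_const ((i:ℝ)+1)
        have hcomp := ((hasDerivAt_auxF (ω * x - ((i:ℝ)+1))).comp x hin).const_mul c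
        refine hcomp.congr_deriv ?_
        simp only [hDdef]
        ring
      · rw [hFeq' e he, heD]
        simp only [if_neg he]
        exact hasDerivAt_const x 0
    · intro e
      by_cases he : e = e₀
      · subst he; rw [hFeq, hIci]
        exact ((hFcont i).memLp_of_hasCompactSupport (hFsupp i)).restrict _
      · rw [hFeq' e he]
        exact MemLp.zero
    · intro e
      by_cases he : e = e₀
      · subst he; rw [hDeq, hIci]
        exact ((hDcont i).memLp_of_hasCompactSupport (hDsupp i)).restrict _
      · rw [hDeq' e he]
        exact MemLp.zero
    · intro e
      rw [heF, hvV]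
      by_cases he : e = e₀
      · rw [if_pos he]
        have h0 : ω * (0:ℝ) - ((i:ℝ)+1) ≤ 0 := by
          have : (0:ℝ) ≤ (i:ℝ) := Nat.cast_nonneg i
          linarith
        simp only [hFdef]
        rw [auxF_zero (Or.inl h0)]
        ring
      · rw [if_neg he]
    · intro e v hv
      by_cases he : e = e₀
      · rw [he, (G.dst_none_iff e₀).2 he₀] at hv
        cases hv
      · rw [heF, hvV, if_neg he]
  refine ⟨φ, ?_, ?_, ?_, ?_⟩
  · intro i
    exact ⟨hH1 i, hl2 i, by rw [hdsq i]; exact Real.sqrt_sq hβ.le,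
      henergy (φ i) (hvV i) (hdsq i)⟩
  · intro i
    refine ⟨((i:ℝ)+2)/ω, fun e x _ hR => ?_⟩
    rw [heF]
    by_cases he : e = e₀
    · rw [if_pos he]
      have h2 : (i:ℝ)+2 ≤ x * ω := (div_le_iff₀ hω).1 hR
      have : (1:ℝ) ≤ ω * x - ((i:ℝ)+1) := by nlinarith
      simp only [hFdef]
      rw [auxF_zero (Or.inr this)]
      ring
    · rw [if_neg he]
  · intro i j hij e x _
    rw [heF, heF]
    by_cases he : e = e₀
    · rw [if_pos he, if_pos he]
      exact hFdisj i j hij x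
    · left; rw [if_neg he]
  · intro N hN a ha
    have hψD : ∀ e x, G.eDeriv (∑ i, a i • φ ↑i) e x
        = ∑ i : Fin (N-1), a i * (if e = e₀ then D ↑i x else 0) := by
      intro e x
      simp [MetricGraph.eDeriv, Prod.snd_sum, Prod.fst_sum, Prod.smul_snd, Prod.smul_fst,
        Finset.sum_apply, Pi.smul_apply, smul_eq_mul, hφdef, heD]
    have hψV : ∀ v, G.vVal (∑ i, a i • φ ↑i) v = 0 := by
      intro v
      simp [MetricGraph.vVal, Prod.snd_sum, Prod.smul_snd, Finset.sum_apply,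
        Pi.smul_apply, smul_eq_mul, hφdef]
    have hdsum : G.dsq (∑ i, a i • φ ↑i) = β ^ 2 := by
      unfold MetricGraph.dsq
      rw [Finset.sum_eq_single e₀]
      · rw [hIci]
        have hpt : ∀ x : ℝ, (G.eDeriv (∑ i, a i • φ ↑i) e₀ x) ^ 2
            = ∑ i : Fin (N-1), (a i) ^ 2 * (D ↑i x) ^ 2 := by
          intro x
          rw [hψD e₀ x]
          simp only [eq_self_iff_true, if_true]
          rw [sq_sum_eq_sum_sq (fun i => a i * D ↑i x) ?_]
          · exact Finset.sum_congr rfl fun i _ => by ring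
          · intro i j hij
            rcases hDdisj ↑i ↑j (fun h => hij (Fin.val_injective h)) x with h | h
            · left; show a i * D (↑i) x = 0; rw [h]; ring
            · right; show a j * D (↑j) x = 0; rw [h]; ring
        simp_rw [hpt]
        rw [MeasureTheory.integral_finset_sum _
          (fun (i : Fin (N-1)) _ => ((hDint2 ↑i).const_mul ((a i) ^ 2) :
            Integrable (fun x => (a i) ^ 2 * (D ↑i x) ^ 2) (volume.restrict (Set.Ici (0:ℝ)))))]
        have hterm : ∀ i : Fin (N-1),
            (∫ x in Set.Ici (0:ℝ), (a i) ^ 2 * (D ↑i x) ^ 2) = (a i) ^ 2 * β ^ 2 := by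
          intro i
          rw [MeasureTheory.integral_const_mul, hDint ↑i]
        rw [Finset.sum_congr rfl fun i _ => hterm i, ← Finset.sum_mul, ha, one_mul]
      · intro e _ he
        have hpt : ∀ x : ℝ, (G.eDeriv (∑ i, a i • φ ↑i) e x) ^ 2 = 0 := by
          intro x
          rw [hψD e x]
          simp [he]
        simp_rw [hpt]
        simp
      · intro h; exact absurd (Finset.mem_univ _) h
    exact ⟨by rw [hdsum]; exact Real.sqrt_sq hβ.le,
      henergy _ hψV hdsum⟩
end
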